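/- arXiv:math/0207282 — 2 statements merged into one kernel-verified Lean document; each statement's English description precedes it below -/
import Mathlib

section
/- For a Lip-normed operator system (X, L) and every n in N, the topology induced on UCP_n(X) by the metric rho_{L,n} coincides with the point-norm topology, i.e. the topology of pointwise norm convergence of maps from X to M_n. -/
/- Framework for Kerr's "Matricial quantum Gromov-Hausdorff distance":
operator systems inside unital C*-algebras, Lip-normed operator systems,
matrix state spaces, and the matricial quantum Gromov-Hausdorff distances. -/

open scoped ComplexOrder ENNReal

noncomputable section

universe u v w

namespace QGHD

/-- Positivity in a *-ring: in a unital C*-algebra this characterizes the positive cone. -/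
def PosIn {A : Type*} [Ring A] [StarRing A] (a : A) : Prop := ∃ b : A, a = star b * b

/-- Positivity of a square matrix over a *-ring: the order on `Mₘ(A)` inherited from the
C*-algebra `Mₘ(A)`. -/
def MatPos {A : Type*} [Ring A] [StarRing A] {m : ℕ} (x : Matrix (Fin m) (Fin m) A) : Prop :=
  ∃ y : Matrix (Fin m) (Fin m) A, x = y.conjTranspose * y

/-- The matrix algebra `Mₙ(ℂ)`, realized as the C*-algebra of operators on `ℂⁿ`
so that it carries its C*-norm. -/
abbrev MatAlg (n : ℕ) : Type := EuclideanSpace ℂ (Fin n) →L[ℂ] EuclideanSpace ℂ (Fin n)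

/-- The C*-norm of a matrix over a unital C*-algebra, computed via the standard
Hilbert module `Aⁿ`. -/
def matNorm {A : Type*} [NormedRing A] [StarRing A] {n : ℕ}
    (z : Matrix (Fin n) (Fin n) A) : ℝ :=
  sSup {r : ℝ | ∃ ξ η : Fin n → A,
    ‖∑ i, star (ξ i) * ξ i‖ ≤ 1 ∧ ‖∑ i, star (η i) * η i‖ ≤ 1 ∧
    r = ‖∑ i, ∑ j, star (ξ i) * z i j * η j‖}

section maps

variable {A : Type u} [Ring A] [StarRing A] [Algebra ℂ A]

/-- A state on an operator system `X ⊆ A`: a unital positive linear functional. -/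
def IsState (X : Submodule ℂ A) (σ : ↥X → ℂ) : Prop :=
  IsLinearMap ℂ σ ∧ (∀ x : ↥X, (x : A) = 1 → σ x = 1) ∧
    ∀ x : ↥X, PosIn (x : A) → 0 ≤ σ x

/-- The state space of an operator system, as a set of functions (with the topology of
pointwise convergence, i.e. the weak-* topology). -/
def States (X : Submodule ℂ A) : Set (↥X → ℂ) := {σ | IsState X σ}

/-- Unitality of a map on an operator system. -/
def Unital {R : Type*} [One R] (X : Submodule ℂ A) (φ : ↥X → R) : Prop :=
  ∀ x : ↥X, (x : A) = 1 → φ x = 1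

/-- The matrix over the ambient algebra associated to a matrix over an operator system. -/
def coeMat {X : Submodule ℂ A} {m : ℕ} (x : Matrix (Fin m) (Fin m) ↥X) :
    Matrix (Fin m) (Fin m) A :=
  Matrix.of fun i j => (x i j : A)

/-- `n`-positivity of a map on an operator system. -/
def NPos {R : Type*} [Ring R] [StarRing R] (X : Submodule ℂ A) (n : ℕ) (φ : ↥X → R) : Prop :=
  ∀ m : ℕ, 1 ≤ m → m ≤ n → ∀ x : Matrix (Fin m) (Fin m) ↥X,
    MatPos (coeMat x) → MatPos (Matrix.of fun i j => φ (x i j))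

/-- Complete positivity of a map on an operator system. -/
def CP {R : Type*} [Ring R] [StarRing R] (X : Submodule ℂ A) (φ : ↥X → R) : Prop :=
  ∀ m : ℕ, ∀ x : Matrix (Fin m) (Fin m) ↥X,
    MatPos (coeMat x) → MatPos (Matrix.of fun i j => φ (x i j))

/-- Unital completely positive maps. -/
def IsUCP {R : Type*} [Ring R] [StarRing R] [Module ℂ R] (X : Submodule ℂ A) (φ : ↥X → R) :
    Prop :=
  IsLinearMap ℂ φ ∧ Unital X φ ∧ CP X φ

/-- Complete positivity for maps defined on a whole *-ring. -/
def CPRing {R S : Type*} [Ring R] [StarRing R] [Ring S] [StarRing S] (φ : R → S) : Prop :=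
  ∀ (m : ℕ) (x : Matrix (Fin m) (Fin m) R), MatPos x → MatPos (Matrix.of fun i j => φ (x i j))

/-- The `ℝ≥0∞`-valued distance on functionals associated with a Lip-norm datum `(dom, L)`:
`sup { |σ(x) - ω(x)| : x ∈ dom, L x ≤ 1 }`. -/
def rhoAux (X : Submodule ℂ A) (dom : Set A) (L : A → ℝ) (σ ω : ↥X → ℂ) : ℝ≥0∞ :=
  ⨆ x : {x : ↥X // (x : A) ∈ dom ∧ L (x : A) ≤ 1}, (‖σ x.1 - ω x.1‖₊ : ℝ≥0∞)

end maps

/-- The topology generated by the balls of an `ℝ≥0∞`-valued distance function.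
(For a genuine metric this is the metric topology.) -/
def ballTopology {α : Type*} (d : α → α → ℝ≥0∞) : TopologicalSpace α :=
  TopologicalSpace.generateFrom
    {s | ∃ (x : α) (ε : ℝ≥0∞), 0 < ε ∧ s = {y | d x y < ε}}

/-- A Lip-normed operator system: a closed unital self-adjoint subspace `X` of a unital
C*-algebra `A` together with a Lip-norm `L` defined on a dense real order-unit subspace
`dom` of the self-adjoint part of `X`, such that `L` vanishes exactly on the real scalar
multiples of the unit, the set `{L ≤ 1}` is closed, and the associated metric on the state
space induces the weak-* topology. -/
structure LipOpSys (A : Type u) [NormedRing A] [StarRing A] [CStarRing A]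
    [NormedAlgebra ℂ A] [CompleteSpace A] [StarModule ℂ A] where
  X : Submodule ℂ A
  closed_carrier : IsClosed (X : Set A)
  one_mem : (1 : A) ∈ X
  star_mem : ∀ x ∈ X, star x ∈ X
  dom : Set A
  dom_subset : ∀ x ∈ dom, x ∈ X ∧ IsSelfAdjoint x
  one_mem_dom : (1 : A) ∈ dom
  add_mem_dom : ∀ x ∈ dom, ∀ y ∈ dom, x + y ∈ dom
  smul_mem_dom : ∀ (c : ℝ), ∀ x ∈ dom, (c : ℂ) • x ∈ dom
  dom_dense : ∀ x ∈ X, IsSelfAdjoint x → x ∈ closure dom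
  L : A → ℝ
  L_nonneg : ∀ x, 0 ≤ L x
  L_add : ∀ x ∈ dom, ∀ y ∈ dom, L (x + y) ≤ L x + L y
  L_smul : ∀ (c : ℝ), ∀ x ∈ dom, L ((c : ℂ) • x) = |c| * L x
  L_eq_zero_iff : ∀ x ∈ dom, (L x = 0 ↔ ∃ c : ℝ, x = (c : ℂ) • (1 : A))
  D1_closed : IsClosed {x : A | x ∈ dom ∧ L x ≤ 1}
  weakStar : ballTopology (fun σ ω : ↥(States X) => rhoAux X dom L σ.1 ω.1) =
    instTopologicalSpaceSubtype

section core

variable {A : Type u} [NormedRing A] [StarRing A] [CStarRing A]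
  [NormedAlgebra ℂ A] [CompleteSpace A] [StarModule ℂ A]
variable {B : Type v} [NormedRing B] [StarRing B] [CStarRing B]
  [NormedAlgebra ℂ B] [CompleteSpace B] [StarModule ℂ B]

/-- The matrix state space `UCPₙ(X)`: unital completely positive maps from `X` into `Mₙ`. -/
def UCPn (S : LipOpSys A) (n : ℕ) : Set (↥S.X → MatAlg n) := {φ | IsUCP S.X φ}

/-- The metric `ρ_{L,n}` on `UCPₙ(X)`. -/
def rho (S : LipOpSys A) (n : ℕ) (φ ψ : ↥S.X → MatAlg n) : ℝ≥0∞ :=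
  ⨆ x : {x : ↥S.X // (x : A) ∈ S.dom ∧ S.L (x : A) ≤ 1}, (‖φ x.1 - ψ x.1‖₊ : ℝ≥0∞)

/-- The metric `ρ_{L,1}` on the state space. -/
def rhoS (S : LipOpSys A) (σ ω : ↥S.X → ℂ) : ℝ≥0∞ := rhoAux S.X S.dom S.L σ ω

/-- The diameter of `UCPₙ(X)` with respect to `ρ_{L,n}`. -/
def diamUCP (S : LipOpSys A) (n : ℕ) : ℝ≥0∞ :=
  ⨆ φ ∈ UCPn S n, ⨆ ψ ∈ UCPn S n, rho S n φ ψ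

/-- The extended seminorm `Lᵉ` on all of `X`:
`Lᵉ(x) = sup { |σ(x) - ω(x)| / ρ_{L,1}(σ,ω) : σ ≠ ω states }`. -/
def Le (S : LipOpSys A) (x : ↥S.X) : ℝ≥0∞ :=
  ⨆ p : {p : (↥S.X → ℂ) × (↥S.X → ℂ) //
      p.1 ∈ States S.X ∧ p.2 ∈ States S.X ∧ p.1 ≠ p.2},
    (‖p.1.1 x - p.1.2 x‖₊ : ℝ≥0∞) / rhoS S p.1.1 p.1.2

/-- The matrix seminorm `Lⁿ` on `Mₙ ⊗ X`. -/
def LnX (S : LipOpSys A) {n : ℕ} (x : Matrix (Fin n) (Fin n) ↥S.X) : ℝ≥0∞ :=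
  ⨆ i, ⨆ j, Le S (x i j)

/-- Membership of a Lip-norm `M` on the direct sum `X ⊕ Y` in the set `M(L_X, L_Y)`:
its domain is `D(L_X) ⊕ D(L_Y)` and it induces `L_X` and `L_Y` as quotient Lip-norms via
the coordinate projections. -/
structure MemM (S : LipOpSys A) (T : LipOpSys B) (M : LipOpSys (A × B)) : Prop where
  X_eq : M.X = S.X.prod T.X
  dom_eq : M.dom = S.dom ×ˢ T.dom
  quot_left : ∀ x ∈ S.dom, S.L x = sInf {r : ℝ | ∃ y ∈ T.dom, M.L (x, y) = r}
  quot_right : ∀ y ∈ T.dom, T.L y = sInf {r : ℝ | ∃ x ∈ S.dom, M.L (x, y) = r}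

/-- The distance, with respect to the metric `ρ_{M,n}` on `UCPₙ(X ⊕ Y)`, between (the
canonical embeddings of) `φ ∈ UCPₙ(X)` and `ψ ∈ UCPₙ(Y)`. -/
def crossRho (S : LipOpSys A) (T : LipOpSys B) (M : LipOpSys (A × B)) (n : ℕ)
    (φ : ↥S.X → MatAlg n) (ψ : ↥T.X → MatAlg n) : ℝ≥0∞ :=
  ⨆ p : {p : ↥S.X × ↥T.X //
      ((p.1 : A), (p.2 : B)) ∈ M.dom ∧ M.L ((p.1 : A), (p.2 : B)) ≤ 1},
    (‖φ p.1.1 - ψ p.1.2‖₊ : ℝ≥0∞)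

/-- The Hausdorff distance between `UCPₙ(X)` and `UCPₙ(Y)` inside `UCPₙ(X ⊕ Y)` with
respect to `ρ_{M,n}`. -/
def hausdorffD (S : LipOpSys A) (T : LipOpSys B) (M : LipOpSys (A × B)) (n : ℕ) : ℝ≥0∞ :=
  max (⨆ φ ∈ UCPn S n, ⨅ ψ ∈ UCPn T n, crossRho S T M n φ ψ)
      (⨆ ψ ∈ UCPn T n, ⨅ φ ∈ UCPn S n, crossRho S T M n φ ψ)

/-- The matricial `n`-distance `distⁿₛ`. -/
def distN (S : LipOpSys A) (T : LipOpSys B) (n : ℕ) : ℝ≥0∞ :=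
  ⨅ M : {M : LipOpSys (A × B) // MemM S T M}, hausdorffD S T M.1 n

/-- The complete distance `distₛ`. -/
def distS (S : LipOpSys A) (T : LipOpSys B) : ℝ≥0∞ :=
  ⨅ M : {M : LipOpSys (A × B) // MemM S T M}, ⨆ n : ℕ, hausdorffD S T M.1 n

/-- The canonical element of `X ⊕ Y` determined by elements of `X` and `Y`. -/
def pairMem (S : LipOpSys A) (T : LipOpSys B) (M : LipOpSys (A × B))
    (h : M.X = S.X.prod T.X) (x : ↥S.X) (y : ↥T.X) : ↥M.X :=
  ⟨((x : A), (y : B)), by rw [h, Submodule.mem_prod]; exact ⟨x.2, y.2⟩⟩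

/-- The matrix seminorm `Lⁿ` evaluated on a pair of matrices over `X` and over `Y`. -/
def LnPair (S : LipOpSys A) (T : LipOpSys B) (M : LipOpSys (A × B))
    (h : M.X = S.X.prod T.X) {n : ℕ}
    (x : Matrix (Fin n) (Fin n) ↥S.X) (z : Matrix (Fin n) (Fin n) ↥T.X) : ℝ≥0∞ :=
  ⨆ i, ⨆ j, Le M (pairMem S T M h (x i j) (z i j))

/-- The set `N^λ_{Lⁿ,Y}(x)` of elements of `Mₙ ⊗ Y` paired with `x ∈ Mₙ ⊗ X` within
`Lⁿ`-distance `λ`. -/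
def NbdY (S : LipOpSys A) (T : LipOpSys B) (M : LipOpSys (A × B))
    (h : M.X = S.X.prod T.X) {n : ℕ} (lam : ℝ≥0∞)
    (x : Matrix (Fin n) (Fin n) ↥S.X) : Set (Matrix (Fin n) (Fin n) ↥T.X) :=
  {z | LnPair S T M h x z ≤ lam}

/-- The set `N^λ_{Lⁿ,X}(y)`. -/
def NbdX (S : LipOpSys A) (T : LipOpSys B) (M : LipOpSys (A × B))
    (h : M.X = S.X.prod T.X) {n : ℕ} (lam : ℝ≥0∞)
    (y : Matrix (Fin n) (Fin n) ↥T.X) : Set (Matrix (Fin n) (Fin n) ↥S.X) :=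
  {z | LnPair S T M h z y ≤ lam}

/-- The `(i,j)` entry of an element of `MatAlg n`. -/
def entry {n : ℕ} (T : MatAlg n) (i j : Fin n) : ℂ :=
  inner ℂ (EuclideanSpace.single i (1 : ℂ)) (T (EuclideanSpace.single j (1 : ℂ)))

/-- The unit of `Mₙ(X)`. -/
def matOne (S : LipOpSys A) (n : ℕ) : Matrix (Fin n) (Fin n) ↥S.X :=
  Matrix.of fun i j => if i = j then (⟨1, S.one_mem⟩ : ↥S.X) else 0

/-- The linear functional `σ_φ` on `Mₙ ⊗ X` associated to a c.p. map `φ : X → Mₙ`. -/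
def sigmaOf {A' : Type u} [Ring A'] [StarRing A'] [Algebra ℂ A'] (X : Submodule ℂ A')
    {n : ℕ} (φ : ↥X → MatAlg n) (x : Matrix (Fin n) (Fin n) ↥X) : ℂ :=
  (n : ℂ)⁻¹ * ∑ i, ∑ j, entry (φ (x i j)) i j

/-- `SCPₙ(X)`: completely positive maps `φ : X → Mₙ` such that `σ_φ` is a state on
`Mₙ ⊗ X`. -/
def SCP (S : LipOpSys A) (n : ℕ) (φ : ↥S.X → MatAlg n) : Prop :=
  IsLinearMap ℂ φ ∧ CP S.X φ ∧ sigmaOf S.X φ (matOne S n) = 1 ∧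
    ∀ x : Matrix (Fin n) (Fin n) ↥S.X, MatPos (coeMat x) → 0 ≤ sigmaOf S.X φ x

/-- A Lip-isometric map between Lip-normed operator systems. -/
def LipIsometric (S : LipOpSys A) (T : LipOpSys B) (Φ : ↥S.X → ↥T.X) : Prop :=
  ∀ x : ↥S.X, (x : A) ∈ S.dom → (Φ x : B) ∈ T.dom ∧ T.L (Φ x : B) = S.L (x : A)

/-- A bi-Lip-isometric unital linear bijection between Lip-normed operator systems. -/
def BiLipIso (S : LipOpSys A) (T : LipOpSys B) (Φ : ↥S.X → ↥T.X) : Prop :=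
  IsLinearMap ℂ Φ ∧ Function.Bijective Φ ∧ (∀ x : ↥S.X, (x : A) = 1 → (Φ x : B) = 1) ∧
    LipIsometric S T Φ ∧
    ∀ y : ↥T.X, (y : B) ∈ T.dom → ∃ x : ↥S.X, Φ x = y ∧ (x : A) ∈ S.dom

/-- `Φ` is an order isomorphism at all matrix levels `m = 1, …, n` (together with
bijectivity and unitality this is a unital `n`-order isomorphism). -/
def OrderIsoTo (S : LipOpSys A) (T : LipOpSys B) (n : ℕ) (Φ : ↥S.X → ↥T.X) : Prop :=
  ∀ m : ℕ, 1 ≤ m → m ≤ n → ∀ x : Matrix (Fin m) (Fin m) ↥S.X,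
    (MatPos (coeMat x) ↔ MatPos (Matrix.of fun i j => ((Φ (x i j) : B))))

/-- `Φ` is an order isomorphism at every matrix level. -/
def CompleteOrderIso (S : LipOpSys A) (T : LipOpSys B) (Φ : ↥S.X → ↥T.X) : Prop :=
  ∀ m : ℕ, ∀ x : Matrix (Fin m) (Fin m) ↥S.X,
    (MatPos (coeMat x) ↔ MatPos (Matrix.of fun i j => ((Φ (x i j) : B))))

/-- Nuclearity of an operator system: the identity map is a point-norm limit of u.c.p.
maps factoring through matrix algebras. -/
def Nuclear (X : Submodule ℂ A) : Prop :=
  ∀ ε : ℝ, 0 < ε → ∀ F : Finset ↥X, ∃ (k : ℕ) (α : ↥X → MatAlg k) (β : MatAlg k → A),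
    IsUCP X α ∧ IsLinearMap ℂ β ∧ β 1 = 1 ∧ CPRing β ∧ (∀ z, β z ∈ X) ∧
    ∀ x ∈ F, ‖β (α x) - (x : A)‖ ≤ ε

/-- The `f`-Leibniz property of a Lip-normed unital C*-algebra: the Lip-norm is the
restriction of an adjoint-invariant extended seminorm, finite on a dense *-subalgebra,
satisfying `L'(xy) ≤ f (L'(x)) (L'(y)) ‖y‖ ‖x‖`. -/
def FLeibniz (f : ℝ → ℝ → ℝ → ℝ → ℝ) (M : LipOpSys A) : Prop :=
  ∃ L' : A → ℝ≥0∞,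
    (∀ x y : A, L' (x + y) ≤ L' x + L' y) ∧
    (∀ (c : ℂ) (x : A), L' (c • x) = (‖c‖₊ : ℝ≥0∞) * L' x) ∧
    (∀ x : A, L' (star x) = L' x) ∧
    (∃ D : Subalgebra ℂ A, (∀ x ∈ D, star x ∈ D) ∧ Dense (D : Set A) ∧
      ∀ x ∈ D, L' x ≠ ⊤) ∧
    (∀ x ∈ M.dom, L' x = ENNReal.ofReal (M.L x)) ∧
    (∀ x y : A, L' x ≠ ⊤ → L' y ≠ ⊤ →
      (L' (x * y)).toReal ≤ f (L' x).toReal (L' y).toReal ‖y‖ ‖x‖)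

/-- The `f`-Leibniz complete distance. -/
def distSf (f : ℝ → ℝ → ℝ → ℝ → ℝ) (S : LipOpSys A) (T : LipOpSys B) : ℝ≥0∞ :=
  ⨅ M : {M : LipOpSys (A × B) // MemM S T M ∧ FLeibniz f M},
    ⨆ n : ℕ, hausdorffD S T M.1 n

end core

/-- A bundled unital C*-algebra. -/
structure CstarAlg : Type (u + 1) where
  carrier : Type u
  [nr : NormedRing carrier]
  [sr : StarRing carrier]
  [cs : CStarRing carrier]
  [na : NormedAlgebra ℂ carrier]
  [cp : CompleteSpace carrier]
  [sm : StarModule ℂ carrier]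

attribute [instance] CstarAlg.nr CstarAlg.sr CstarAlg.cs CstarAlg.na CstarAlg.cp CstarAlg.sm

/-- A bundled Lip-normed operator system. -/
structure BundledLip : Type (u + 1) where
  alg : CstarAlg.{u}
  sys : LipOpSys alg.carrier

/-- `Afn_L(ε)`: the smallest `k` such that some Lip-normed operator subsystem of `M_k` is
within complete distance `ε` of the given Lip-normed operator system (`⊤` if none). -/
def Afn (b : BundledLip.{u}) (ε : ℝ) : ℕ∞ :=
  sInf {m : ℕ∞ | ∃ k : ℕ, m = (k : ℕ∞) ∧
    ∃ T : LipOpSys (MatAlg k), distS b.sys T ≤ ENNReal.ofReal ε}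

/-- Order-unit states of a subset `dom` of (the self-adjoint part of) a C*-algebra. -/
def IsOUState {A : Type u} [Ring A] [StarRing A] [Algebra ℂ A] (dom : Set A)
    (f : ↥dom → ℝ) : Prop :=
  (∀ x y z : ↥dom, (x : A) + (y : A) = (z : A) → f x + f y = f z) ∧
  (∀ (c : ℝ) (x y : ↥dom), (c : ℂ) • (x : A) = (y : A) → c * f x = f y) ∧
  (∀ x : ↥dom, (x : A) = 1 → f x = 1) ∧
  (∀ x : ↥dom, PosIn (x : A) → 0 ≤ f x)

/-- The order-unit state space. -/
def OUStates {A : Type u} [Ring A] [StarRing A] [Algebra ℂ A] (dom : Set A) :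
    Set (↥dom → ℝ) :=
  {f | IsOUState dom f}

end QGHD

namespace QGHD

variable {A : Type u} [NormedRing A] [StarRing A] [CStarRing A]
  [NormedAlgebra ℂ A] [CompleteSpace A] [StarModule ℂ A]

section Statement3Aux

open scoped NNReal

local notation "⟪" x ", " y "⟫" => @inner ℂ _ _ x y

/-! ### Generic facts about the `ℝ≥0∞`-valued sup-metrics -/

/-- Triangle inequality for sup-type `ℝ≥0∞`-distances. -/
lemma iSup_nnnorm_sub_triangle {ι : Sort*} {G : Type*} [SeminormedAddCommGroup G]
    (f g h : ι → G) :
    (⨆ i, (‖f i - h i‖₊ : ℝ≥0∞)) ≤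
      (⨆ i, (‖f i - g i‖₊ : ℝ≥0∞)) + ⨆ i, (‖g i - h i‖₊ : ℝ≥0∞) := by
  refine iSup_le fun i => ?_
  calc (‖f i - h i‖₊ : ℝ≥0∞) ≤ (‖f i - g i‖₊ : ℝ≥0∞) + (‖g i - h i‖₊ : ℝ≥0∞) := by
        have : f i - h i = (f i - g i) + (g i - h i) := by abel
        rw [this]
        exact_mod_cast ENNReal.coe_le_coe.mpr (nnnorm_add_le _ _)
    _ ≤ _ := add_le_add (le_iSup (fun i => ((‖f i - g i‖₊ : ℝ≥0∞))) i)
        (le_iSup (fun i => ((‖g i - h i‖₊ : ℝ≥0∞))) i)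

lemma iSup_nnnorm_sub_self {ι : Sort*} {G : Type*} [SeminormedAddCommGroup G] (f : ι → G) :
    (⨆ i, (‖f i - f i‖₊ : ℝ≥0∞)) = 0 := by
  simp

lemma inner_self_nonneg_complex {n : ℕ} (v : EuclideanSpace ℂ (Fin n)) :
    (0 : ℂ) ≤ ⟪v, v⟫ := by
  rw [Complex.le_def]
  constructor
  · simpa using inner_self_nonneg (𝕜 := ℂ) (x := v)
  · simpa using (inner_self_im (𝕜 := ℂ) v).symm

/-- The quadratic-form bound: if the quadratic form of `T` is bounded by `c` on the unit
sphere, then `‖T‖ ≤ 4 * c`. -/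
lemma norm_le_four_mul_of_quad {n : ℕ} (T : MatAlg n) (c : ℝ) (hc : 0 ≤ c)
    (h : ∀ ξ : EuclideanSpace ℂ (Fin n), ‖ξ‖ = 1 → ‖(⟪ξ, T ξ⟫ : ℂ)‖ ≤ c) :
    ‖T‖ ≤ 4 * c := by
  have hq : ∀ w : EuclideanSpace ℂ (Fin n), ‖(⟪w, T w⟫ : ℂ)‖ ≤ ‖w‖ ^ 2 * c := by
    intro w
    rcases eq_or_ne w 0 with rfl | hw
    · simp [hc]
    · have hnw : ‖w‖ ≠ 0 := norm_ne_zero_iff.mpr hw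
      set u : EuclideanSpace ℂ (Fin n) := ((‖w‖ : ℂ))⁻¹ • w with hu
      have hu1 : ‖u‖ = 1 := by
        rw [hu, norm_smul, norm_inv, Complex.norm_real, Real.norm_eq_abs,
          abs_of_nonneg (norm_nonneg w), inv_mul_cancel₀ hnw]
      have hwu : w = (‖w‖ : ℂ) • u := by
        rw [hu, smul_smul, mul_inv_cancel₀ (show ((‖w‖ : ℝ) : ℂ) ≠ 0 by exact_mod_cast hnw), one_smul]
      calc ‖(⟪w, T w⟫ : ℂ)‖ = ‖(⟪(‖w‖ : ℂ) • u, T ((‖w‖ : ℂ) • u)⟫ : ℂ)‖ := by rw [← hwu]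
        _ = ‖w‖ ^ 2 * ‖(⟪u, T u⟫ : ℂ)‖ := by
            rw [map_smul, inner_smul_left, inner_smul_right, Complex.conj_ofReal]
            rw [norm_mul, norm_mul, Complex.norm_real, Real.norm_eq_abs,
              abs_of_nonneg (norm_nonneg w)]
            ring
        _ ≤ ‖w‖ ^ 2 * c := by
            have := h u hu1
            have h2 : (0:ℝ) ≤ ‖w‖ ^ 2 := sq_nonneg _
            nlinarith [norm_nonneg (⟪u, T u⟫ : ℂ)]
  have hq' : ∀ w : EuclideanSpace ℂ (Fin n), ‖(⟪T w, w⟫ : ℂ)‖ ≤ ‖w‖ ^ 2 * c := by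
    intro w
    rw [← inner_conj_symm, RCLike.norm_conj]
    exact hq w
  have hpair : ∀ η ζ : EuclideanSpace ℂ (Fin n), ‖η‖ = 1 → ‖ζ‖ = 1 →
      ‖(⟪T ζ, η⟫ : ℂ)‖ ≤ 4 * c := by
    intro η ζ hη hζ
    have hpol := inner_map_polarization (T : EuclideanSpace ℂ (Fin n) →ₗ[ℂ]
      EuclideanSpace ℂ (Fin n)) η ζ
    simp only [ContinuousLinearMap.coe_coe] at hpol
    rw [hpol]
    have key : ∀ w : EuclideanSpace ℂ (Fin n), ‖w‖ ≤ 2 → ‖(⟪T w, w⟫ : ℂ)‖ ≤ 4 * c := by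
      intro w hw
      have hx2 : ‖w‖ ^ 2 ≤ 4 := by nlinarith [norm_nonneg w, hw]
      calc ‖(⟪T w, w⟫ : ℂ)‖ ≤ ‖w‖ ^ 2 * c := hq' w
        _ ≤ 4 * c := mul_le_mul_of_nonneg_right hx2 hc
    have b1 : ‖(⟪T (η + ζ), η + ζ⟫ : ℂ)‖ ≤ 4 * c := key _ (by
      calc ‖η + ζ‖ ≤ ‖η‖ + ‖ζ‖ := norm_add_le _ _
        _ = 2 := by rw [hη, hζ]; norm_num)
    have b2 : ‖(⟪T (η - ζ), η - ζ⟫ : ℂ)‖ ≤ 4 * c := key _ (by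
      calc ‖η - ζ‖ ≤ ‖η‖ + ‖ζ‖ := norm_sub_le _ _
        _ = 2 := by rw [hη, hζ]; norm_num)
    have b3 : ‖(⟪T (η + Complex.I • ζ), η + Complex.I • ζ⟫ : ℂ)‖ ≤ 4 * c := key _ (by
      calc ‖η + Complex.I • ζ‖ ≤ ‖η‖ + ‖Complex.I • ζ‖ := norm_add_le _ _
        _ = 2 := by rw [hη, norm_smul, Complex.norm_I, one_mul, hζ]; norm_num)
    have b4 : ‖(⟪T (η - Complex.I • ζ), η - Complex.I • ζ⟫ : ℂ)‖ ≤ 4 * c := key _ (by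
      calc ‖η - Complex.I • ζ‖ ≤ ‖η‖ + ‖Complex.I • ζ‖ := norm_sub_le _ _
        _ = 2 := by rw [hη, norm_smul, Complex.norm_I, one_mul, hζ]; norm_num)
    have t3 : ‖(Complex.I * ⟪T (η + Complex.I • ζ), η + Complex.I • ζ⟫ : ℂ)‖ =
        ‖(⟪T (η + Complex.I • ζ), η + Complex.I • ζ⟫ : ℂ)‖ := by
      rw [norm_mul, Complex.norm_I, one_mul]
    have t4 : ‖(Complex.I * ⟪T (η - Complex.I • ζ), η - Complex.I • ζ⟫ : ℂ)‖ =
        ‖(⟪T (η - Complex.I • ζ), η - Complex.I • ζ⟫ : ℂ)‖ := by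
      rw [norm_mul, Complex.norm_I, one_mul]
    have hnum : ‖(⟪T (η + ζ), η + ζ⟫ - ⟪T (η - ζ), η - ζ⟫ +
            Complex.I * ⟪T (η + Complex.I • ζ), η + Complex.I • ζ⟫ -
            Complex.I * ⟪T (η - Complex.I • ζ), η - Complex.I • ζ⟫ : ℂ)‖ ≤ 16 * c := by
      calc ‖(⟪T (η + ζ), η + ζ⟫ - ⟪T (η - ζ), η - ζ⟫ +
            Complex.I * ⟪T (η + Complex.I • ζ), η + Complex.I • ζ⟫ -
            Complex.I * ⟪T (η - Complex.I • ζ), η - Complex.I • ζ⟫ : ℂ)‖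
          ≤ ‖(⟪T (η + ζ), η + ζ⟫ - ⟪T (η - ζ), η - ζ⟫ +
            Complex.I * ⟪T (η + Complex.I • ζ), η + Complex.I • ζ⟫ : ℂ)‖ +
            ‖(Complex.I * ⟪T (η - Complex.I • ζ), η - Complex.I • ζ⟫ : ℂ)‖ :=
            norm_sub_le _ _
        _ ≤ (‖(⟪T (η + ζ), η + ζ⟫ - ⟪T (η - ζ), η - ζ⟫ : ℂ)‖ +
            ‖(Complex.I * ⟪T (η + Complex.I • ζ), η + Complex.I • ζ⟫ : ℂ)‖) +
            ‖(Complex.I * ⟪T (η - Complex.I • ζ), η - Complex.I • ζ⟫ : ℂ)‖ :=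
            add_le_add_left (norm_add_le _ _) _
        _ ≤ ((‖(⟪T (η + ζ), η + ζ⟫ : ℂ)‖ + ‖(⟪T (η - ζ), η - ζ⟫ : ℂ)‖) +
            ‖(Complex.I * ⟪T (η + Complex.I • ζ), η + Complex.I • ζ⟫ : ℂ)‖) +
            ‖(Complex.I * ⟪T (η - Complex.I • ζ), η - Complex.I • ζ⟫ : ℂ)‖ :=
            add_le_add_left (add_le_add_left (norm_sub_le _ _) _) _
        _ ≤ 16 * c := by
            rw [t3, t4]
            linarith [b1, b2, b3, b4]
    rw [norm_div]
    have h4 : ‖(4 : ℂ)‖ = 4 := by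
      norm_num
    rw [h4]
    linarith [hnum]
  -- deduce the operator norm bound
  refine T.opNorm_le_bound (by positivity) fun v => ?_
  rcases eq_or_ne v 0 with rfl | hv
  · simp
  · have hnv : ‖v‖ ≠ 0 := norm_ne_zero_iff.mpr hv
    set ζ : EuclideanSpace ℂ (Fin n) := ((‖v‖ : ℂ))⁻¹ • v with hζdef
    have hζ1 : ‖ζ‖ = 1 := by
      rw [hζdef, norm_smul, norm_inv, Complex.norm_real, Real.norm_eq_abs,
        abs_of_nonneg (norm_nonneg v), inv_mul_cancel₀ hnv]
    have hvζ : v = (‖v‖ : ℂ) • ζ := by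
      rw [hζdef, smul_smul, mul_inv_cancel₀ (show ((‖v‖ : ℝ) : ℂ) ≠ 0 by exact_mod_cast hnv), one_smul]
    have hTζ : ‖T ζ‖ ≤ 4 * c := by
      rcases eq_or_ne (T ζ) 0 with h0 | h0
      · rw [h0, norm_zero]; positivity
      · have hnTζ : ‖T ζ‖ ≠ 0 := norm_ne_zero_iff.mpr h0
        set η : EuclideanSpace ℂ (Fin n) := ((‖T ζ‖ : ℂ))⁻¹ • T ζ with hηdef
        have hη1 : ‖η‖ = 1 := by
          rw [hηdef, norm_smul, norm_inv, Complex.norm_real, Real.norm_eq_abs,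
            abs_of_nonneg (norm_nonneg _), inv_mul_cancel₀ hnTζ]
        have hval : (⟪T ζ, η⟫ : ℂ) = (‖T ζ‖ : ℂ) := by
          rw [hηdef, inner_smul_right, inner_self_eq_norm_sq_to_K]
          have hne : ((‖T ζ‖ : ℝ) : ℂ) ≠ 0 := by exact_mod_cast hnTζ
          field_simp
          norm_cast
        have := hpair η ζ hη1 hζ1
        rw [hval, Complex.norm_real, Real.norm_eq_abs, abs_of_nonneg (norm_nonneg _)] at this
        exact this
    calc ‖T v‖ = ‖T ((‖v‖ : ℂ) • ζ)‖ := by rw [← hvζ]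
      _ = ‖v‖ * ‖T ζ‖ := by
          rw [map_smul, norm_smul, Complex.norm_real, Real.norm_eq_abs,
            abs_of_nonneg (norm_nonneg v)]
      _ ≤ ‖v‖ * (4 * c) := by
          exact mul_le_mul_of_nonneg_left hTζ (norm_nonneg v)
      _ = 4 * c * ‖v‖ := by ring

/-- In a unital C⋆-algebra, `‖z‖•1 + z` is a star-square for selfadjoint `z`. -/
lemma posIn_norm_one_add {B : Type v} [NormedRing B] [StarRing B] [CStarRing B]
    [NormedAlgebra ℂ B] [CompleteSpace B] [StarModule ℂ B]
    {z : B} (hz : IsSelfAdjoint z) :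
    ∃ b : B, (‖z‖ : ℂ) • (1 : B) + z = star b * b := by
  letI : CStarAlgebra B :=
    { ‹NormedRing B›, ‹StarRing B›, ‹CStarRing B›, ‹NormedAlgebra ℂ B›,
      ‹StarModule ℂ B›, ‹CompleteSpace B› with }
  letI := CStarAlgebra.spectralOrder B
  haveI := CStarAlgebra.spectralOrderedRing B
  have halg : algebraMap ℝ B ‖z‖ = (‖z‖ : ℂ) • (1 : B) := by
    rw [Algebra.algebraMap_eq_smul_one, ← Complex.coe_smul]
  have h2 : -z ≤ (‖z‖ : ℂ) • (1 : B) := by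
    have := IsSelfAdjoint.le_algebraMap_norm_self (hz.neg)
    rwa [norm_neg, halg] at this
  have h1 : (0 : B) ≤ (‖z‖ : ℂ) • (1 : B) + z := by
    have := add_le_add_left h2 z
    rwa [neg_add_cancel] at this
  refine ⟨CFC.sqrt ((‖z‖ : ℂ) • (1 : B) + z), ?_⟩
  rw [(IsSelfAdjoint.of_nonneg (CFC.sqrt_nonneg _)).star_eq,
    CFC.sqrt_mul_sqrt_self _ h1]

/-! ### Basic consequences of being u.c.p. -/

variable {S : LipOpSys A} {n : ℕ}

lemma ucp_map_one {φ : ↥S.X → MatAlg n} (hφ : IsUCP S.X φ) :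
    φ ⟨1, S.one_mem⟩ = 1 := hφ.2.1 _ rfl

/-- A u.c.p. map sends `PosIn` elements to star-squares. -/
lemma ucp_posIn {φ : ↥S.X → MatAlg n} (hφ : IsUCP S.X φ) {x : ↥S.X}
    (hx : PosIn (x : A)) : ∃ b : MatAlg n, φ x = star b * b := by
  obtain ⟨c, hc⟩ := hx
  have h1 : MatPos (coeMat (Matrix.of fun _ _ : Fin 1 => x)) := by
    refine ⟨Matrix.of fun _ _ => c, ?_⟩
    ext i j
    simp [coeMat, Matrix.mul_apply, Matrix.conjTranspose_apply, hc, Fin.sum_univ_one]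
  obtain ⟨Y, hY⟩ := hφ.2.2 1 _ h1
  refine ⟨Y 0 0, ?_⟩
  have h2 := congrFun (congrFun hY 0) 0
  simpa [Matrix.mul_apply, Matrix.conjTranspose_apply, Fin.sum_univ_one] using h2

/-- The quadratic form of a u.c.p. map at a selfadjoint element is bounded by the norm. -/
lemma ucp_inner_norm_le {φ : ↥S.X → MatAlg n} (hφ : IsUCP S.X φ) {z : ↥S.X}
    (hz : IsSelfAdjoint (z : A)) {ξ : EuclideanSpace ℂ (Fin n)} (hξ : ‖ξ‖ = 1) :
    ‖(⟪ξ, φ z ξ⟫ : ℂ)‖ ≤ ‖(z : A)‖ := by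
  set c : ℝ := ‖(z : A)‖ with hcdef
  have inner_one : (⟪ξ, (1 : MatAlg n) ξ⟫ : ℂ) = 1 := by
    rw [ContinuousLinearMap.one_apply, inner_self_eq_norm_sq_to_K, hξ]
    norm_num
  have quad_pos : ∀ b : MatAlg n, (0 : ℂ) ≤ ⟪ξ, (star b * b) ξ⟫ := by
    intro b
    rw [ContinuousLinearMap.mul_apply, ContinuousLinearMap.star_eq_adjoint,
      ContinuousLinearMap.adjoint_inner_right]
    exact inner_self_nonneg_complex _
  -- the two positive combinations
  have key : ∀ z' : ↥S.X, IsSelfAdjoint (z' : A) → ‖(z' : A)‖ = c →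
      (0 : ℂ) ≤ (c : ℂ) + ⟪ξ, φ z' ξ⟫ := by
    intro z' hz' hnorm
    obtain ⟨b, hb⟩ := posIn_norm_one_add hz'
    have hmem : ((c : ℂ) • (1 : A) + (z' : A)) ∈ S.X :=
      S.X.add_mem (S.X.smul_mem _ S.one_mem) z'.2
    have heq : (⟨(c : ℂ) • (1 : A) + (z' : A), hmem⟩ : ↥S.X) =
        (c : ℂ) • (⟨1, S.one_mem⟩ : ↥S.X) + z' := by
      apply Subtype.ext; rfl
    have hφval : φ ⟨(c : ℂ) • (1 : A) + (z' : A), hmem⟩ =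
        (c : ℂ) • (1 : MatAlg n) + φ z' := by
      rw [heq, hφ.1.map_add, hφ.1.map_smul, ucp_map_one hφ]
    have hpos : PosIn ((⟨(c : ℂ) • (1 : A) + (z' : A), hmem⟩ : ↥S.X) : A) := by
      refine ⟨b, ?_⟩
      show (c : ℂ) • (1 : A) + (z' : A) = star b * b
      rw [hnorm] at hb
      exact hb
    obtain ⟨b', hb'⟩ := ucp_posIn hφ hpos
    have := quad_pos b'
    rw [← hb', hφval] at this
    rwa [ContinuousLinearMap.add_apply, inner_add_right, ContinuousLinearMap.smul_apply,
      inner_smul_right, inner_one, mul_one] at this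
  have h1 : (0 : ℂ) ≤ (c : ℂ) + ⟪ξ, φ z ξ⟫ := key z hz rfl
  have h2 : (0 : ℂ) ≤ (c : ℂ) - ⟪ξ, φ z ξ⟫ := by
    have := key (-z) (by simpa using hz.neg) (by simp [hcdef])
    rw [hφ.1.map_neg] at this
    rwa [ContinuousLinearMap.neg_apply, inner_neg_right, ← sub_eq_add_neg] at this
  set q : ℂ := ⟪ξ, φ z ξ⟫ with hqdef
  rw [Complex.le_def] at h1 h2
  simp only [Complex.add_re, Complex.add_im, Complex.sub_re, Complex.sub_im,
    Complex.ofReal_re, Complex.ofReal_im, Complex.zero_re, Complex.zero_im] at h1 h2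
  have him : q.im = 0 := by
    have := h1.2
    have := h2.2
    linarith [h1.2, h2.2]
  have hqre : q = ((q.re : ℝ) : ℂ) := by
    apply Complex.ext <;> simp [him]
  rw [hqdef] at hqre ⊢
  rw [hqre, Complex.norm_real, Real.norm_eq_abs]
  rw [abs_le]
  constructor <;> [linarith [h1.1]; linarith [h2.1]]

lemma ucp_norm_le_sa {φ : ↥S.X → MatAlg n} (hφ : IsUCP S.X φ) {z : ↥S.X}
    (hz : IsSelfAdjoint (z : A)) : ‖φ z‖ ≤ 4 * ‖(z : A)‖ :=
  norm_le_four_mul_of_quad _ _ (norm_nonneg _) fun _ hξ => ucp_inner_norm_le hφ hz hξ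

/-- The vector state associated to a u.c.p. map and a unit vector. -/
lemma ucp_vector_state {φ : ↥S.X → MatAlg n} (hφ : IsUCP S.X φ)
    {ξ : EuclideanSpace ℂ (Fin n)} (hξ : ‖ξ‖ = 1) :
    (fun x : ↥S.X => (⟪ξ, φ x ξ⟫ : ℂ)) ∈ States S.X := by
  refine ⟨⟨fun x y => ?_, fun c x => ?_⟩, fun x hx => ?_, fun x hx => ?_⟩
  · show (⟪ξ, φ (x + y) ξ⟫ : ℂ) = (⟪ξ, φ x ξ⟫ : ℂ) + (⟪ξ, φ y ξ⟫ : ℂ)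
    rw [hφ.1.map_add, ContinuousLinearMap.add_apply, inner_add_right]
  · show (⟪ξ, φ (c • x) ξ⟫ : ℂ) = c • (⟪ξ, φ x ξ⟫ : ℂ)
    rw [hφ.1.map_smul, ContinuousLinearMap.smul_apply, inner_smul_right, smul_eq_mul]
  · have hone : x = (⟨1, S.one_mem⟩ : ↥S.X) := Subtype.ext hx
    show (⟪ξ, φ x ξ⟫ : ℂ) = 1
    rw [hone, ucp_map_one hφ, ContinuousLinearMap.one_apply,
      inner_self_eq_norm_sq_to_K, hξ]
    norm_num
  · obtain ⟨b, hb⟩ := ucp_posIn hφ hx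
    show (0 : ℂ) ≤ (⟪ξ, φ x ξ⟫ : ℂ)
    rw [hb, ContinuousLinearMap.mul_apply, ContinuousLinearMap.star_eq_adjoint,
      ContinuousLinearMap.adjoint_inner_right]
    exact inner_self_nonneg_complex _

/-! ### The hard direction: `ρ`-balls are point-norm open -/

/-- Balls of the state-space metric are weak-* open (this is the content of the
`weakStar` axiom of a Lip-normed operator system). -/
lemma states_ball_isOpen (S : LipOpSys A) (σ₀ : ↥(States S.X)) {ε : ℝ≥0∞} (hε : 0 < ε) :
    IsOpen {ω : ↥(States S.X) | rhoAux S.X S.dom S.L σ₀.1 ω.1 < ε} := by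
  rw [← S.weakStar]
  exact TopologicalSpace.isOpen_generateFrom_of_mem ⟨σ₀, ε, hε, rfl⟩

lemma le_rhoAux {σ ω : ↥S.X → ℂ} {x : ↥S.X} (hx : (x : A) ∈ S.dom)
    (hL : S.L (x : A) ≤ 1) :
    (‖σ x - ω x‖₊ : ℝ≥0∞) ≤ rhoAux S.X S.dom S.L σ ω :=
  le_iSup (fun y : {y : ↥S.X // (y : A) ∈ S.dom ∧ S.L (y : A) ≤ 1} =>
    ((‖σ y.1 - ω y.1‖₊ : ℝ≥0∞))) ⟨x, hx, hL⟩

lemma le_rho {φ ψ : ↥S.X → MatAlg n} {x : ↥S.X} (hx : (x : A) ∈ S.dom)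
    (hL : S.L (x : A) ≤ 1) :
    (‖φ x - ψ x‖₊ : ℝ≥0∞) ≤ rho S n φ ψ :=
  le_iSup (fun y : {y : ↥S.X // (y : A) ∈ S.dom ∧ S.L (y : A) ≤ 1} =>
    ((‖φ y.1 - ψ y.1‖₊ : ℝ≥0∞))) ⟨x, hx, hL⟩

/-- Centered version of the hard direction: every `ρ`-ball centered at a point of
`UCPₙ(X)` contains a point-norm open neighbourhood of its center. -/
lemma rho_centered (S : LipOpSys A) (n : ℕ) (φ₀ : ↥(UCPn S n)) {δ : ℝ≥0∞} (hδ : 0 < δ) :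
    ∃ V : Set ↥(UCPn S n), IsOpen V ∧ φ₀ ∈ V ∧ ∀ ψ ∈ V, rho S n φ₀.1 ψ.1 < δ := by
  classical
  obtain ⟨r, hr, hrδ⟩ := ENNReal.lt_iff_exists_add_pos_lt.mp hδ
  rw [zero_add] at hrδ
  set d : ℝ≥0 := r / 8 with hd
  have hd0 : 0 < d := by
    rw [hd]
    exact div_pos hr (by norm_num)
  have hd8 : (8 : ℝ≥0) * d = r := by
    rw [hd, mul_comm, div_mul_cancel₀ _ (by norm_num : (8 : ℝ≥0) ≠ 0)]
  set K : Set (EuclideanSpace ℂ (Fin n)) := Metric.sphere 0 1 with hK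
  have hstate : ∀ (ψ : ↥(UCPn S n)) (ξ : ↥K),
      (fun x : ↥S.X => (⟪(ξ : EuclideanSpace ℂ (Fin n)), ψ.1 x ξ⟫ : ℂ)) ∈ States S.X :=
    fun ψ ξ => ucp_vector_state ψ.2 (mem_sphere_zero_iff_norm.mp ξ.2)
  set F : ↥K × ↥(UCPn S n) → ↥(States S.X) := fun p => ⟨_, hstate p.2 p.1⟩ with hF
  have hFc : Continuous F := by
    refine Continuous.subtype_mk (continuous_pi fun x => ?_) _
    have h1 : Continuous fun p : ↥K × ↥(UCPn S n) =>
        ((p.1 : EuclideanSpace ℂ (Fin n))) := continuous_subtype_val.comp continuous_fst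
    have h2 : Continuous fun p : ↥K × ↥(UCPn S n) => p.2.1 x :=
      (continuous_apply x).comp (continuous_subtype_val.comp continuous_snd)
    have h3 : Continuous fun p : ↥K × ↥(UCPn S n) =>
        p.2.1 x (p.1 : EuclideanSpace ℂ (Fin n)) :=
      isBoundedBilinearMap_apply.continuous.comp (h2.prodMk h1)
    exact h1.inner h3
  set G : ↥K × ↥(UCPn S n) → ↥(States S.X) := fun p => F (p.1, φ₀) with hG
  have hGc : Continuous G := hFc.comp (continuous_fst.prodMk continuous_const)
  set W : ↥K → Set (↥K × ↥(UCPn S n)) := fun ξ₀ =>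
    (G ⁻¹' {ω | rhoAux S.X S.dom S.L (F (ξ₀, φ₀)).1 ω.1 < (d : ℝ≥0∞)}) ∩
    (F ⁻¹' {ω | rhoAux S.X S.dom S.L (F (ξ₀, φ₀)).1 ω.1 < (d : ℝ≥0∞)}) with hW
  have hdpos : (0 : ℝ≥0∞) < (d : ℝ≥0∞) := ENNReal.coe_pos.mpr hd0
  have hWopen : ∀ ξ₀, IsOpen (W ξ₀) := fun ξ₀ =>
    ((states_ball_isOpen S _ hdpos).preimage hGc).inter
      ((states_ball_isOpen S _ hdpos).preimage hFc)
  have hself : ∀ σ : ↥(States S.X), rhoAux S.X S.dom S.L σ.1 σ.1 = 0 := by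
    intro σ
    simp [rhoAux]
  have hcover : (Set.univ : Set ↥K) ×ˢ ({φ₀} : Set ↥(UCPn S n)) ⊆ ⋃ ξ₀, W ξ₀ := by
    rintro ⟨ξ, ψ⟩ ⟨-, hψ⟩
    simp only [Set.mem_singleton_iff] at hψ
    refine Set.mem_iUnion.mpr ⟨ξ, ?_, ?_⟩
    · show rhoAux S.X S.dom S.L (F (ξ, φ₀)).1 (F (ξ, φ₀)).1 < (d : ℝ≥0∞)
      rw [hself]; exact hdpos
    · show rhoAux S.X S.dom S.L (F (ξ, φ₀)).1 (F (ξ, ψ)).1 < (d : ℝ≥0∞)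
      rw [hψ, hself]; exact hdpos
  haveI : CompactSpace ↥K := by
    rw [hK]
    exact Metric.sphere.compactSpace _ _
  obtain ⟨u, v, hu, hv, hKu, hφv, huv⟩ :=
    generalized_tube_lemma isCompact_univ isCompact_singleton (isOpen_iUnion hWopen) hcover
  refine ⟨v, hv, hφv rfl, fun ψ hψ => ?_⟩
  have key : ∀ x : {x : ↥S.X // (x : A) ∈ S.dom ∧ S.L (x : A) ≤ 1},
      (‖φ₀.1 x.1 - ψ.1 x.1‖₊ : ℝ≥0∞) ≤ ((8 * d : ℝ≥0) : ℝ≥0∞) := by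
    intro x
    have hreal : ‖φ₀.1 x.1 - ψ.1 x.1‖ ≤ 4 * (2 * (d : ℝ)) := by
      refine norm_le_four_mul_of_quad _ _ (by positivity) fun ξ hξ => ?_
      have hξK : ξ ∈ K := by
        rw [hK]
        exact mem_sphere_zero_iff_norm.mpr hξ
      have hmem : ((⟨ξ, hξK⟩ : ↥K), ψ) ∈ ⋃ ξ₀, W ξ₀ :=
        huv ⟨hKu (Set.mem_univ _), hψ⟩
      obtain ⟨ξ₀, h1, h2⟩ := Set.mem_iUnion.mp hmem
      -- h1 : state of (ξ, φ₀) is d-close to center; h2 : state of (ξ, ψ) is d-close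
      have e1 : ‖(F (ξ₀, φ₀)).1 x.1 - (F (⟨ξ, hξK⟩, φ₀)).1 x.1‖ ≤ (d : ℝ) := by
        have h3 : (‖(F (ξ₀, φ₀)).1 x.1 - (F (⟨ξ, hξK⟩, φ₀)).1 x.1‖₊ : ℝ≥0∞) ≤
            rhoAux S.X S.dom S.L (F (ξ₀, φ₀)).1 (F (⟨ξ, hξK⟩, φ₀)).1 :=
          le_rhoAux x.2.1 x.2.2
        have h4 := h3.trans_lt h1
        rw [ENNReal.coe_lt_coe] at h4
        exact_mod_cast (NNReal.coe_lt_coe.mpr h4).le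
      have e2 : ‖(F (ξ₀, φ₀)).1 x.1 - (F (⟨ξ, hξK⟩, ψ)).1 x.1‖ ≤ (d : ℝ) := by
        have h3 : (‖(F (ξ₀, φ₀)).1 x.1 - (F (⟨ξ, hξK⟩, ψ)).1 x.1‖₊ : ℝ≥0∞) ≤
            rhoAux S.X S.dom S.L (F (ξ₀, φ₀)).1 (F (⟨ξ, hξK⟩, ψ)).1 :=
          le_rhoAux x.2.1 x.2.2
        have h4 := h3.trans_lt h2
        rw [ENNReal.coe_lt_coe] at h4
        exact_mod_cast (NNReal.coe_lt_coe.mpr h4).le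
      have expand : (⟪ξ, (φ₀.1 x.1 - ψ.1 x.1) ξ⟫ : ℂ) =
          (F (⟨ξ, hξK⟩, φ₀)).1 x.1 - (F (⟨ξ, hξK⟩, ψ)).1 x.1 := by
        show (⟪ξ, (φ₀.1 x.1 - ψ.1 x.1) ξ⟫ : ℂ) =
          (⟪ξ, φ₀.1 x.1 ξ⟫ : ℂ) - (⟪ξ, ψ.1 x.1 ξ⟫ : ℂ)
        rw [ContinuousLinearMap.sub_apply, inner_sub_right]
      rw [expand]
      calc ‖(F (⟨ξ, hξK⟩, φ₀)).1 x.1 - (F (⟨ξ, hξK⟩, ψ)).1 x.1‖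
          ≤ ‖(F (⟨ξ, hξK⟩, φ₀)).1 x.1 - (F (ξ₀, φ₀)).1 x.1‖ +
            ‖(F (ξ₀, φ₀)).1 x.1 - (F (⟨ξ, hξK⟩, ψ)).1 x.1‖ := by
            have : (F (⟨ξ, hξK⟩, φ₀)).1 x.1 - (F (⟨ξ, hξK⟩, ψ)).1 x.1 =
                ((F (⟨ξ, hξK⟩, φ₀)).1 x.1 - (F (ξ₀, φ₀)).1 x.1) +
                ((F (ξ₀, φ₀)).1 x.1 - (F (⟨ξ, hξK⟩, ψ)).1 x.1) := by abel
            rw [this]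
            exact norm_add_le _ _
        _ ≤ (d : ℝ) + (d : ℝ) := by
            refine add_le_add ?_ e2
            rw [norm_sub_rev]
            exact e1
        _ = 2 * (d : ℝ) := by ring
    have hnn : ‖φ₀.1 x.1 - ψ.1 x.1‖₊ ≤ 8 * d := by
      rw [← NNReal.coe_le_coe]
      push_cast
      calc (‖φ₀.1 x.1 - ψ.1 x.1‖₊ : ℝ) = ‖φ₀.1 x.1 - ψ.1 x.1‖ := rfl
        _ ≤ 4 * (2 * (d : ℝ)) := hreal
        _ = 8 * (d : ℝ) := by ring
    exact_mod_cast ENNReal.coe_le_coe.mpr hnn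
  calc rho S n φ₀.1 ψ.1 ≤ ((8 * d : ℝ≥0) : ℝ≥0∞) := iSup_le key
    _ = (r : ℝ≥0∞) := by rw [hd8]
    _ < δ := hrδ

/-! ### The easy direction: point-norm opens are `ρ`-open -/

/-- The evaluation estimate: `ρ`-closeness controls pointwise norm closeness at
selfadjoint elements. -/
lemma rho_eval_sa (S : LipOpSys A) (n : ℕ) {a : ↥S.X} (ha : IsSelfAdjoint (a : A))
    {ε : ℝ} (hε : 0 < ε) :
    ∃ δ : ℝ≥0∞, 0 < δ ∧ ∀ φ ψ : ↥(UCPn S n), rho S n φ.1 ψ.1 < δ →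
      ‖φ.1 a - ψ.1 a‖ < ε := by
  have hcl : (a : A) ∈ closure S.dom := S.dom_dense _ a.2 ha
  obtain ⟨y, hy, hdist⟩ := Metric.mem_closure_iff.mp hcl (ε / 16) (by positivity)
  have hyX : y ∈ S.X := (S.dom_subset y hy).1
  have hysa : IsSelfAdjoint y := (S.dom_subset y hy).2
  set Ly : ℝ := S.L y with hLy
  have hLy0 : 0 ≤ Ly := S.L_nonneg y
  set t : ℝ := ε / (2 * (Ly + 1)) with ht
  have ht0 : 0 < t := by
    rw [ht]
    positivity
  refine ⟨ENNReal.ofReal t, by simp [ht0], fun φ ψ hρ => ?_⟩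
  set yh1 : ↥S.X := ⟨y, hyX⟩ with hyh1
  have hdiff_sa : IsSelfAdjoint ((a - yh1 : ↥S.X) : A) := by
    have : ((a - yh1 : ↥S.X) : A) = (a : A) - y := rfl
    rw [this]
    exact ha.sub hysa
  have hnorm_diff : ‖((a - yh1 : ↥S.X) : A)‖ < ε / 16 := by
    have : ((a - yh1 : ↥S.X) : A) = (a : A) - y := rfl
    rw [this, ← dist_eq_norm]
    exact hdist
  have happrox1 : ‖φ.1 (a - yh1)‖ < 4 * (ε / 16) := by
    calc ‖φ.1 (a - yh1)‖ ≤ 4 * ‖((a - yh1 : ↥S.X) : A)‖ := ucp_norm_le_sa φ.2 hdiff_sa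
      _ < 4 * (ε / 16) := by nlinarith [hnorm_diff]
  have happrox2 : ‖ψ.1 (a - yh1)‖ < 4 * (ε / 16) := by
    calc ‖ψ.1 (a - yh1)‖ ≤ 4 * ‖((a - yh1 : ↥S.X) : A)‖ := ucp_norm_le_sa ψ.2 hdiff_sa
      _ < 4 * (ε / 16) := by nlinarith [hnorm_diff]
  have hmain : ‖φ.1 yh1 - ψ.1 yh1‖ ≤ ε / 2 := by
    rcases eq_or_lt_of_le hLy0 with hL0 | hLpos
    · -- L y = 0: y is a scalar multiple of the unit
      obtain ⟨c, hc⟩ := (S.L_eq_zero_iff y hy).mp hL0.symm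
      have hy1 : yh1 = (c : ℂ) • (⟨1, S.one_mem⟩ : ↥S.X) := by
        apply Subtype.ext
        exact hc
      rw [hy1, φ.2.1.map_smul, ψ.2.1.map_smul, ucp_map_one φ.2, ucp_map_one ψ.2,
        sub_self, norm_zero]
      positivity
    · -- L y > 0: rescale into the Lip-ball
      set yh2 : ↥S.X := ((Ly⁻¹ : ℝ) : ℂ) • yh1 with hyh2
      have hyh2dom : ((yh2 : ↥S.X) : A) ∈ S.dom := by
        show ((Ly⁻¹ : ℝ) : ℂ) • y ∈ S.dom
        exact S.smul_mem_dom Ly⁻¹ y hy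
      have hyh2L : S.L ((yh2 : ↥S.X) : A) ≤ 1 := by
        show S.L (((Ly⁻¹ : ℝ) : ℂ) • y) ≤ 1
        rw [S.L_smul Ly⁻¹ y hy, abs_of_nonneg (inv_nonneg.mpr hLy0), ← hLy,
          inv_mul_cancel₀ (ne_of_gt hLpos)]
      have hperel : (‖φ.1 yh2 - ψ.1 yh2‖₊ : ℝ≥0∞) < ENNReal.ofReal t :=
        (le_rho hyh2dom hyh2L).trans_lt hρ
      have hreal : ‖φ.1 yh2 - ψ.1 yh2‖ < t := by
        rw [ENNReal.ofReal, ENNReal.coe_lt_coe] at hperel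
        have := NNReal.coe_lt_coe.mpr hperel
        rwa [coe_nnnorm, Real.coe_toNNReal _ ht0.le] at this
      have hrescale : yh1 = ((Ly : ℝ) : ℂ) • yh2 := by
        rw [hyh2, smul_smul]
        have : ((Ly : ℝ) : ℂ) * ((Ly⁻¹ : ℝ) : ℂ) = 1 := by
          rw [← Complex.ofReal_mul, mul_inv_cancel₀ (ne_of_gt hLpos)]
          norm_num
        rw [this, one_smul]
      calc ‖φ.1 yh1 - ψ.1 yh1‖ = ‖((Ly : ℝ) : ℂ)‖ * ‖φ.1 yh2 - ψ.1 yh2‖ := by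
            rw [hrescale, φ.2.1.map_smul, ψ.2.1.map_smul, ← smul_sub]
            exact norm_smul ((Ly : ℝ) : ℂ) (φ.1 yh2 - ψ.1 yh2)
        _ = Ly * ‖φ.1 yh2 - ψ.1 yh2‖ := by
            rw [Complex.norm_real, Real.norm_eq_abs, abs_of_nonneg hLy0]
        _ ≤ Ly * t := mul_le_mul_of_nonneg_left hreal.le hLy0
        _ ≤ ε / 2 := by
            rw [ht]
            rw [mul_div_assoc']
            rw [div_le_div_iff₀ (by positivity) (by norm_num)]
            nlinarith [hLy0, hε.le]
  have hsplit : φ.1 a - ψ.1 a =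
      φ.1 (a - yh1) + (φ.1 yh1 - ψ.1 yh1) - ψ.1 (a - yh1) := by
    rw [φ.2.1.map_sub, ψ.2.1.map_sub]
    abel
  calc ‖φ.1 a - ψ.1 a‖
      ≤ ‖φ.1 (a - yh1)‖ + ‖φ.1 yh1 - ψ.1 yh1‖ + ‖ψ.1 (a - yh1)‖ := by
        rw [hsplit]
        exact (norm_sub_le _ _).trans (add_le_add_left (norm_add_le _ _) _)
    _ < ε := by linarith [happrox1, happrox2, hmain]

/-- The evaluation estimate at an arbitrary element of `X`. -/
lemma rho_eval (S : LipOpSys A) (n : ℕ) (x : ↥S.X) {ε : ℝ} (hε : 0 < ε) :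
    ∃ δ : ℝ≥0∞, 0 < δ ∧ ∀ φ ψ : ↥(UCPn S n), rho S n φ.1 ψ.1 < δ →
      ‖φ.1 x - ψ.1 x‖ < ε := by
  obtain ⟨sx, hsxdef⟩ : ∃ sx : ↥S.X, sx = ⟨star (x : A), S.star_mem _ x.2⟩ := ⟨_, rfl⟩
  obtain ⟨a, hadef⟩ : ∃ a : ↥S.X, a = (2⁻¹ : ℂ) • (x + sx) := ⟨_, rfl⟩
  obtain ⟨b, hbdef⟩ : ∃ b : ↥S.X, b = ((2⁻¹ : ℂ) * (-Complex.I)) • (x - sx) := ⟨_, rfl⟩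
  have hI : Complex.I * ((2⁻¹ : ℂ) * (-Complex.I)) = (2⁻¹ : ℂ) := by
    have h := Complex.I_mul_I
    calc Complex.I * ((2⁻¹ : ℂ) * (-Complex.I))
        = -(Complex.I * Complex.I) * 2⁻¹ := by ring
      _ = (2⁻¹ : ℂ) := by rw [h]; ring
  have hxab : x = a + Complex.I • b := by
    rw [hadef, hbdef, smul_smul, hI, smul_add, smul_sub, ← add_sub_assoc]
    have h2 : (2⁻¹ : ℂ) • x + (2⁻¹ : ℂ) • sx + (2⁻¹ : ℂ) • x = x + (2⁻¹ : ℂ) • sx := by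
      rw [add_right_comm, ← add_smul]
      norm_num
    rw [h2, add_sub_cancel_right]
  have hstar2 : star (2⁻¹ : ℂ) = 2⁻¹ := by simp
  have hsxcoe : ((sx : ↥S.X) : A) = star (x : A) := by rw [hsxdef]
  have hacoe : ((a : ↥S.X) : A) = (2⁻¹ : ℂ) • ((x : A) + star (x : A)) := by
    rw [hadef]
    show (2⁻¹ : ℂ) • ((x : A) + (sx : A)) = _
    rw [hsxcoe]
  have hbcoe : ((b : ↥S.X) : A) =
      ((2⁻¹ : ℂ) * (-Complex.I)) • ((x : A) - star (x : A)) := by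
    rw [hbdef]
    show ((2⁻¹ : ℂ) * (-Complex.I)) • ((x : A) - (sx : A)) = _
    rw [hsxcoe]
  have hasa : IsSelfAdjoint ((a : ↥S.X) : A) := by
    rw [hacoe, IsSelfAdjoint, star_smul, star_add, star_star, hstar2, add_comm]
  have hbsa : IsSelfAdjoint ((b : ↥S.X) : A) := by
    have hstarb : star ((2⁻¹ : ℂ) * (-Complex.I)) = -((2⁻¹ : ℂ) * (-Complex.I)) := by
      rw [star_mul', star_neg, Complex.star_def, Complex.conj_I]
      rw [show (starRingEnd ℂ) (2⁻¹ : ℂ) = (2⁻¹ : ℂ) by simp [Complex.ext_iff]]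
      ring
    rw [hbcoe, IsSelfAdjoint, star_smul, star_sub, star_star, hstarb, neg_smul,
      ← smul_neg, neg_sub]
  obtain ⟨δa, hδa, hesta⟩ := rho_eval_sa S n hasa (half_pos hε)
  obtain ⟨δb, hδb, hestb⟩ := rho_eval_sa S n hbsa (half_pos hε)
  refine ⟨min δa δb, lt_min hδa hδb, fun φ ψ hρ => ?_⟩
  have hρa := hρ.trans_le (min_le_left _ _)
  have hρb := hρ.trans_le (min_le_right _ _)
  have hsplit : φ.1 x - ψ.1 x = (φ.1 a - ψ.1 a) + Complex.I • (φ.1 b - ψ.1 b) := by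
    rw [hxab, φ.2.1.map_add, ψ.2.1.map_add, φ.2.1.map_smul, ψ.2.1.map_smul, smul_sub]
    abel
  calc ‖φ.1 x - ψ.1 x‖
      ≤ ‖φ.1 a - ψ.1 a‖ + ‖Complex.I • (φ.1 b - ψ.1 b)‖ := by
        rw [hsplit]
        exact norm_add_le _ _
    _ = ‖φ.1 a - ψ.1 a‖ + ‖φ.1 b - ψ.1 b‖ := by
        rw [norm_smul Complex.I (φ.1 b - ψ.1 b), Complex.norm_I, one_mul]
    _ < ε / 2 + ε / 2 := add_lt_add (hesta φ ψ hρa) (hestb φ ψ hρb)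
    _ = ε := by ring

/-- Every point-norm open set contains a `ρ`-ball around each of its points. -/
lemma exists_rho_ball_subset (S : LipOpSys A) (n : ℕ) {U : Set ↥(UCPn S n)}
    (hU : IsOpen U) {φ₀ : ↥(UCPn S n)} (hφ₀ : φ₀ ∈ U) :
    ∃ δ : ℝ≥0∞, 0 < δ ∧ {ψ : ↥(UCPn S n) | rho S n φ₀.1 ψ.1 < δ} ⊆ U := by
  classical
  obtain ⟨O, hO, hOU⟩ := isOpen_induced_iff.mp hU
  have hφ₀O : φ₀.1 ∈ O := by
    rw [← hOU] at hφ₀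
    exact hφ₀
  obtain ⟨I, u, hIu, hpi⟩ := isOpen_pi_iff.mp hO _ hφ₀O
  have h4 : ∀ i : {i // i ∈ I}, ∃ ε > 0, Metric.ball (φ₀.1 i.1) ε ⊆ u i.1 := fun i =>
    Metric.isOpen_iff.mp (hIu i.1 i.2).1 _ (hIu i.1 i.2).2
  choose εf hεf hball using h4
  have h5 : ∀ i : {i // i ∈ I}, ∃ δ : ℝ≥0∞, 0 < δ ∧
      ∀ φ ψ : ↥(UCPn S n), rho S n φ.1 ψ.1 < δ → ‖φ.1 i.1 - ψ.1 i.1‖ < εf i :=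
    fun i => rho_eval S n i.1 (hεf i)
  choose δf hδf hδest using h5
  refine ⟨I.attach.inf δf, ?_, fun ψ hψ => ?_⟩
  · rw [Finset.lt_inf_iff (by norm_num : (0 : ℝ≥0∞) < ⊤)]
    exact fun i _ => hδf i
  · rw [← hOU]
    refine hpi ?_
    intro i hi
    have hρi : rho S n φ₀.1 ψ.1 < δf ⟨i, hi⟩ :=
      lt_of_lt_of_le hψ (Finset.inf_le (Finset.mem_attach _ ⟨i, hi⟩))
    have hest := hδest ⟨i, hi⟩ φ₀ ψ hρi
    refine hball ⟨i, hi⟩ ?_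
    rw [Metric.mem_ball, dist_eq_norm, norm_sub_rev]
    exact hest

end Statement3Aux

/-- For a Lip-normed operator system `(X, L)` and every `n ≥ 1`, the
topology induced on `UCPₙ(X)` by the metric `ρ_{L,n}` coincides with the point-norm
topology (the topology of pointwise norm convergence of maps from `X` to `Mₙ`). -/
theorem statement3 (S : LipOpSys A) (n : ℕ) (hn : 1 ≤ n) :
    ballTopology (fun φ ψ : ↥(UCPn S n) => rho S n φ.1 ψ.1) =
      instTopologicalSpaceSubtype := by
  refine le_antisymm ?_ ?_
  · -- every point-norm open set is `ρ`-open
    rw [TopologicalSpace.le_def]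
    intro U hU
    show TopologicalSpace.GenerateOpen _ U
    classical
    have h := fun φ₀ : {φ // φ ∈ U} => exists_rho_ball_subset S n hU φ₀.2
    choose δ hδ hsub using h
    have hUeq : U = ⋃ φ₀ : {φ // φ ∈ U},
        {ψ : ↥(UCPn S n) | rho S n (φ₀.1).1 ψ.1 < δ φ₀} := by
      ext ψ
      constructor
      · intro hψ
        refine Set.mem_iUnion.mpr ⟨⟨ψ, hψ⟩, ?_⟩
        show rho S n ψ.1 ψ.1 < δ ⟨ψ, hψ⟩
        have hz : rho S n ψ.1 ψ.1 = 0 := by simp [rho]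
        rw [hz]
        exact hδ _
      · intro hψ
        obtain ⟨φ₀, hφ₀⟩ := Set.mem_iUnion.mp hψ
        exact hsub φ₀ hφ₀
    rw [hUeq, ← Set.sUnion_range]
    apply TopologicalSpace.GenerateOpen.sUnion
    rintro t ⟨φ₀, rfl⟩
    exact TopologicalSpace.GenerateOpen.basic _ ⟨φ₀.1, δ φ₀, hδ φ₀, rfl⟩
  · -- every `ρ`-ball is point-norm open
    refine le_generateFrom ?_
    rintro s ⟨χ, ε, hε, rfl⟩
    rw [isOpen_iff_forall_mem_open]
    intro ψ₀ hψ₀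
    have hψ₀' : rho S n χ.1 ψ₀.1 < ε := hψ₀
    obtain ⟨r, hr, hrε⟩ := ENNReal.lt_iff_exists_add_pos_lt.mp hψ₀'
    obtain ⟨V, hVopen, hψ₀V, hV⟩ := rho_centered S n ψ₀ (ENNReal.coe_pos.mpr hr)
    refine ⟨V, fun ψ hψ => ?_, hVopen, hψ₀V⟩
    show rho S n χ.1 ψ.1 < ε
    calc rho S n χ.1 ψ.1 ≤ rho S n χ.1 ψ₀.1 + rho S n ψ₀.1 ψ.1 :=
        iSup_nnnorm_sub_triangle _ _ _
      _ ≤ rho S n χ.1 ψ₀.1 + (r : ℝ≥0∞) := add_le_add_right (hV ψ hψ).le _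
      _ < ε := hrε
end QGHD
end
end

section
/- If (X, L_X) and (Y, L_Y) are Lip-normed operator systems and m > n >= 1 are natural numbers, then dist^n_s(X, Y) <= dist^m_s(X, Y). -/
/- Framework for Kerr's "Matricial quantum Gromov-Hausdorff distance":
operator systems inside unital C*-algebras, Lip-normed operator systems,
matrix state spaces, and the matricial quantum Gromov-Hausdorff distances. -/

open scoped ComplexOrder ENNReal

noncomputable section

universe u v w

namespace QGHD

variable {A : Type u} [NormedRing A] [StarRing A] [CStarRing A]
  [NormedAlgebra ℂ A] [CompleteSpace A] [StarModule ℂ A]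
variable {B : Type v} [NormedRing B] [StarRing B] [CStarRing B]
  [NormedAlgebra ℂ B] [CompleteSpace B] [StarModule ℂ B]

section statement14aux

open ContinuousLinearMap in
/-- helper sum lemma -/
private lemma sum_dite_fin {n m : ℕ} (hnm : n ≤ m) (f : Fin n → ℂ) :
    (∑ i : Fin m, if h : (i : ℕ) < n then f ⟨i, h⟩ else 0) = ∑ p : Fin n, f p := by
  have h1 : (∑ i : Fin m, if h : (i : ℕ) < n then f ⟨i, h⟩ else 0)
      = ∑ i ∈ Finset.range m, (fun i => if h : i < n then f ⟨i, h⟩ else 0) i :=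
    Fin.sum_univ_eq_sum_range (fun i => if h : i < n then f ⟨i, h⟩ else 0) m
  have h2 : (∑ p : Fin n, f p)
      = ∑ i ∈ Finset.range n, (fun i => if h : i < n then f ⟨i, h⟩ else 0) i := by
    rw [← Fin.sum_univ_eq_sum_range]
    exact Finset.sum_congr rfl fun p _ => by simp
  rw [h1, h2]
  refine (Finset.sum_subset (Finset.range_subset_range.2 hnm) ?_).symm
  intro i _ hi
  simp only [Finset.mem_range, not_lt] at hi
  exact dif_neg (not_lt.2 hi)

variable {n m : ℕ}

/-- The isometric inclusion of `ℂⁿ` into `ℂᵐ`. -/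
noncomputable def Uemb (n m : ℕ) (hnm : n ≤ m) :
    EuclideanSpace ℂ (Fin n) →L[ℂ] EuclideanSpace ℂ (Fin m) :=
  LinearMap.toContinuousLinearMap
    { toFun := fun ξ => WithLp.toLp 2 (fun i : Fin m => if h : (i : ℕ) < n then ξ ⟨i, h⟩ else 0)
      map_add' := fun ξ η => by
        ext i
        show _ = (_ + _ : EuclideanSpace ℂ (Fin m)) i
        simp only [PiLp.add_apply]
        split <;> simp
      map_smul' := fun c ξ => by
        ext i
        show _ = (c • _ : EuclideanSpace ℂ (Fin m)) i
        simp only [PiLp.smul_apply, RingHom.id_apply, smul_eq_mul]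
        split <;> simp }

/-- The adjoint of `Uemb`, concretely. -/
noncomputable def Udag (n m : ℕ) (hnm : n ≤ m) :
    EuclideanSpace ℂ (Fin m) →L[ℂ] EuclideanSpace ℂ (Fin n) :=
  LinearMap.toContinuousLinearMap
    { toFun := fun η => WithLp.toLp 2 (fun p => η (Fin.castLE hnm p))
      map_add' := fun ξ η => by ext p; rfl
      map_smul' := fun c ξ => by ext p; rfl }

lemma Uemb_apply (hnm : n ≤ m) (ξ : EuclideanSpace ℂ (Fin n)) (i : Fin m) :
    Uemb n m hnm ξ i = if h : (i : ℕ) < n then ξ ⟨i, h⟩ else 0 := rfl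

lemma Udag_apply (hnm : n ≤ m) (η : EuclideanSpace ℂ (Fin m)) (p : Fin n) :
    Udag n m hnm η p = η (Fin.castLE hnm p) := rfl

lemma Udag_eq_adjoint (hnm : n ≤ m) :
    Udag n m hnm = ContinuousLinearMap.adjoint (Uemb n m hnm) := by
  rw [ContinuousLinearMap.eq_adjoint_iff]
  intro x y
  rw [PiLp.inner_apply, PiLp.inner_apply]
  simp only [RCLike.inner_apply]
  rw [show (∑ i : Fin m, (Uemb n m hnm y i) * starRingEnd ℂ (x i))
      = ∑ i : Fin m, if h : (i : ℕ) < n then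
          y ⟨i, h⟩ * starRingEnd ℂ (x (Fin.castLE hnm ⟨i, h⟩)) else 0 from
    Finset.sum_congr rfl fun i _ => by
      rw [Uemb_apply]
      by_cases h : (i : ℕ) < n
      · rw [dif_pos h, dif_pos h]
        rfl
      · rw [dif_neg h, dif_neg h, zero_mul]]
  rw [sum_dite_fin hnm (fun p => y p * starRingEnd ℂ (x (Fin.castLE hnm p)))]
  exact Finset.sum_congr rfl fun p _ => by rw [Udag_apply]

lemma Udag_comp_Uemb (hnm : n ≤ m) :
    (Udag n m hnm).comp (Uemb n m hnm) = (1 : MatAlg n) := by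
  refine ContinuousLinearMap.ext fun ξ => ?_
  ext p
  show Uemb n m hnm ξ (Fin.castLE hnm p) = ξ p
  rw [Uemb_apply]
  exact (dif_pos p.2).trans (congrArg ξ (Fin.ext rfl))

lemma norm_Uemb_le (hnm : n ≤ m) : ‖Uemb n m hnm‖ ≤ 1 := by
  have h := ContinuousLinearMap.norm_adjoint_comp_self (𝕜 := ℂ) (Uemb n m hnm)
  rw [← Udag_eq_adjoint hnm, Udag_comp_Uemb hnm] at h
  have h1 : ‖(1 : MatAlg n)‖ ≤ 1 := ContinuousLinearMap.norm_id_le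
  nlinarith [norm_nonneg (Uemb n m hnm)]

lemma norm_Udag_le (hnm : n ≤ m) : ‖Udag n m hnm‖ ≤ 1 := by
  rw [Udag_eq_adjoint hnm]
  rw [show ‖ContinuousLinearMap.adjoint (Uemb n m hnm)‖ = ‖Uemb n m hnm‖ from
    (ContinuousLinearMap.adjoint (𝕜 := ℂ)).norm_map _]
  exact norm_Uemb_le hnm

end statement14aux
section statement14aux2

variable {k r r' N : ℕ}

lemma entry_toEuclideanCLM (M : Matrix (Fin r) (Fin r) ℂ) (p q : Fin r) :
    entry (Matrix.toEuclideanCLM (𝕜 := ℂ) M) p q = M p q := by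
  unfold entry
  rw [show (EuclideanSpace.single q (1:ℂ)) = WithLp.toLp 2 (Pi.single q 1) from rfl,
    Matrix.toEuclideanCLM_toLp, EuclideanSpace.inner_single_left]
  simp [Matrix.mulVec_single]

lemma toEuclideanCLM_symm_apply (z : MatAlg r) (p q : Fin r) :
    (Matrix.toEuclideanCLM (𝕜 := ℂ)).symm z p q = entry z p q := by
  conv_lhs => rw [show z = Matrix.toEuclideanCLM (𝕜 := ℂ)
    ((Matrix.toEuclideanCLM (𝕜 := ℂ)).symm z) from (StarAlgEquiv.apply_symm_apply _ _).symm]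
  rw [StarAlgEquiv.symm_apply_apply, ← entry_toEuclideanCLM
    ((Matrix.toEuclideanCLM (𝕜 := ℂ)).symm z), StarAlgEquiv.apply_symm_apply]

lemma entry_star (z : MatAlg r) (p q : Fin r) :
    entry (star z) p q = starRingEnd ℂ (entry z q p) := by
  unfold entry
  rw [ContinuousLinearMap.star_eq_adjoint, ContinuousLinearMap.adjoint_inner_right,
    ← inner_conj_symm]

lemma entry_adjoint_comp (a b : EuclideanSpace ℂ (Fin r) →L[ℂ] EuclideanSpace ℂ (Fin r'))
    (p q : Fin r) :
    entry ((ContinuousLinearMap.adjoint a).comp b) p q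
      = inner ℂ (a (EuclideanSpace.single p 1)) (b (EuclideanSpace.single q 1)) := by
  unfold entry
  rw [ContinuousLinearMap.comp_apply, ContinuousLinearMap.adjoint_inner_right]

/-- The transport of matrices over `Mₙ` to complex matrices. -/
noncomputable def matE (k r : ℕ) :
    Matrix (Fin k) (Fin k) (MatAlg r) ≃+* Matrix (Fin k × Fin r) (Fin k × Fin r) ℂ :=
  (RingEquiv.mapMatrix ((Matrix.toEuclideanCLM (𝕜 := ℂ) (n := Fin r)).symm.toRingEquiv)).trans
    (Matrix.compRingEquiv (Fin k) (Fin r) ℂ)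

lemma matE_apply (x : Matrix (Fin k) (Fin k) (MatAlg r)) (i j : Fin k) (p q : Fin r) :
    matE k r x (i, p) (j, q) = entry (x i j) p q := by
  simp only [matE, RingEquiv.coe_trans, Function.comp_apply, RingEquiv.mapMatrix_apply,
    Matrix.compRingEquiv_apply, Matrix.comp_apply, Matrix.map_apply]
  exact toEuclideanCLM_symm_apply _ p q

lemma matE_conjTranspose (x : Matrix (Fin k) (Fin k) (MatAlg r)) :
    matE k r x.conjTranspose = (matE k r x).conjTranspose := by
  ext ⟨i, p⟩ ⟨j, q⟩
  rw [matE_apply, Matrix.conjTranspose_apply, Matrix.conjTranspose_apply, matE_apply,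
    entry_star]
  rfl

open scoped MatrixOrder in
lemma psd_eq_star_mul {ι : Type*} [Fintype ι] [DecidableEq ι] {A : Matrix ι ι ℂ}
    (h : A.PosSemidef) : ∃ B : Matrix ι ι ℂ, A = B.conjTranspose * B := by
  obtain ⟨B, rfl⟩ := CStarAlgebra.nonneg_iff_eq_star_mul_self.mp h.nonneg
  exact ⟨B, rfl⟩

lemma matPos_iff_posSemidef (x : Matrix (Fin k) (Fin k) (MatAlg r)) :
    MatPos x ↔ (matE k r x).PosSemidef := by
  constructor
  · rintro ⟨y, rfl⟩
    rw [map_mul, matE_conjTranspose]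
    exact Matrix.posSemidef_conjTranspose_mul_self _
  · intro h
    obtain ⟨B, hB⟩ := psd_eq_star_mul h
    refine ⟨(matE k r).symm B, (matE k r).injective ?_⟩
    have hBc : matE k r (((matE k r).symm B).conjTranspose) = B.conjTranspose := by
      rw [matE_conjTranspose, RingEquiv.apply_symm_apply]
    rw [map_mul, hBc, RingEquiv.apply_symm_apply, ← hB]

lemma gram_posSemidef {ι : Type} [Fintype ι] [DecidableEq ι]
    (v : Fin N → ι → EuclideanSpace ℂ (Fin r')) :
    (Matrix.of fun i j : ι => (∑ s, inner ℂ (v s i) (v s j) : ℂ)).PosSemidef := by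
  refine Matrix.PosSemidef.of_dotProduct_mulVec_nonneg ?_ ?_
  · ext i j
    rw [Matrix.conjTranspose_apply, Matrix.of_apply, Matrix.of_apply, star_sum]
    exact Finset.sum_congr rfl fun s _ => inner_conj_symm _ _
  · intro d
    have key : dotProduct (star d) ((Matrix.of fun i j : ι =>
        (∑ s, inner ℂ (v s i) (v s j) : ℂ)).mulVec d)
        = ∑ s, (inner ℂ (∑ j, d j • v s j) (∑ j, d j • v s j) : ℂ) := by
      have lhs : dotProduct (star d) ((Matrix.of fun i j : ι =>
          (∑ s, inner ℂ (v s i) (v s j) : ℂ)).mulVec d)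
          = ∑ i, ∑ j, ∑ s, starRingEnd ℂ (d i) * ((inner ℂ (v s i) (v s j) : ℂ) * d j) := by
        simp only [dotProduct, Matrix.mulVec, Matrix.of_apply, Pi.star_apply,
          RCLike.star_def, Finset.sum_mul, Finset.mul_sum]
      have rhs : (∑ s, (inner ℂ (∑ j, d j • v s j) (∑ j, d j • v s j) : ℂ))
          = ∑ s, ∑ i, ∑ j, starRingEnd ℂ (d i) * ((inner ℂ (v s i) (v s j) : ℂ) * d j) := by
        refine Finset.sum_congr rfl fun s _ => ?_
        rw [sum_inner]
        refine Finset.sum_congr rfl fun i _ => ?_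
        rw [inner_smul_left, inner_sum, Finset.mul_sum]
        refine Finset.sum_congr rfl fun j _ => ?_
        rw [inner_smul_right]
        ring
      rw [lhs, rhs]
      rw [show (∑ i, ∑ j, ∑ s, starRingEnd ℂ (d i) * ((inner ℂ (v s i) (v s j) : ℂ) * d j))
          = ∑ i, ∑ s, ∑ j, starRingEnd ℂ (d i) * ((inner ℂ (v s i) (v s j) : ℂ) * d j) from
        Finset.sum_congr rfl fun i _ => Finset.sum_comm]
      exact Finset.sum_comm
    rw [key]
    refine Finset.sum_nonneg fun s _ => ?_
    rw [show (inner ℂ (∑ j, d j • v s j) (∑ j, d j • v s j) : ℂ)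
        = (‖∑ j, d j • v s j‖ : ℂ) ^ 2 from inner_self_eq_norm_sq_to_K _]
    norm_cast
    positivity

/-- Sums of "Gram type" matrices over `MatAlg r` are matrix-positive. -/
lemma matPos_gram
    (a : Fin N → Fin k → (EuclideanSpace ℂ (Fin r) →L[ℂ] EuclideanSpace ℂ (Fin r'))) :
    MatPos (Matrix.of fun i j =>
      ∑ s, (ContinuousLinearMap.adjoint (a s i)).comp (a s j)) := by
  rw [matPos_iff_posSemidef]
  have : matE k r (Matrix.of fun i j =>
      ∑ s, (ContinuousLinearMap.adjoint (a s i)).comp (a s j))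
      = Matrix.of fun ip jq : Fin k × Fin r =>
        (∑ s, inner ℂ (a s ip.1 (EuclideanSpace.single ip.2 1))
          (a s jq.1 (EuclideanSpace.single jq.2 1)) : ℂ) := by
    ext ⟨i, p⟩ ⟨j, q⟩
    rw [matE_apply, Matrix.of_apply, Matrix.of_apply]
    have : entry (∑ s, (ContinuousLinearMap.adjoint (a s i)).comp (a s j)) p q
        = ∑ s, entry ((ContinuousLinearMap.adjoint (a s i)).comp (a s j)) p q := by
      unfold entry
      rw [ContinuousLinearMap.sum_apply, inner_sum]
    rw [this]
    exact Finset.sum_congr rfl fun s _ => entry_adjoint_comp _ _ _ _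
  rw [this]
  exact gram_posSemidef (N := N) (r' := r') (ι := Fin k × Fin r)
    (fun s ip => a s ip.1 (EuclideanSpace.single ip.2 1))

lemma matPos_add {x y : Matrix (Fin k) (Fin k) (MatAlg r)}
    (hx : MatPos x) (hy : MatPos y) : MatPos (x + y) := by
  rw [matPos_iff_posSemidef] at hx hy ⊢
  rw [map_add]
  exact hx.add hy

end statement14aux2
section statement14aux3

variable {n m : ℕ}

/-- Compression of a map into `Mₘ` to a map into `Mₙ`. -/
noncomputable def compressMap (hnm : n ≤ m) {X : Type w} (φ : X → MatAlg m) : X → MatAlg n :=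
  fun x => (Udag n m hnm).comp ((φ x).comp (Uemb n m hnm))

/-- Lift of a map into `Mₙ` to a map into `Mₘ`, block-diagonally via the `(0,0)` corner
state. -/
noncomputable def liftMap (hn : 0 < n) (hnm : n ≤ m) {X : Type w} (φ : X → MatAlg n) :
    X → MatAlg m :=
  fun x => (Uemb n m hnm).comp ((φ x).comp (Udag n m hnm))
    + entry (φ x) ⟨0, hn⟩ ⟨0, hn⟩ • (1 - (Uemb n m hnm).comp (Udag n m hnm))

lemma Udag_Uemb_apply (hnm : n ≤ m) (ξ : EuclideanSpace ℂ (Fin n)) :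
    Udag n m hnm (Uemb n m hnm ξ) = ξ := by
  have := congrArg (fun (T : MatAlg n) => T ξ) (Udag_comp_Uemb hnm)
  simpa using this

lemma entry_one (p : Fin r) : entry (1 : MatAlg r) p p = 1 := by
  unfold entry
  rw [ContinuousLinearMap.one_apply, EuclideanSpace.inner_single_left]
  simp

lemma entry_smul (c : ℂ) (z : MatAlg r) (p q : Fin r) :
    entry (c • z) p q = c * entry z p q := by
  unfold entry
  rw [ContinuousLinearMap.smul_apply, inner_smul_right]

lemma entry_add (z w : MatAlg r) (p q : Fin r) :
    entry (z + w) p q = entry z p q + entry w p q := by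
  unfold entry
  rw [ContinuousLinearMap.add_apply, inner_add_right]

lemma entry_sum {N : ℕ} (z : Fin N → MatAlg r) (p q : Fin r) :
    entry (∑ s, z s) p q = ∑ s, entry (z s) p q := by
  unfold entry
  rw [ContinuousLinearMap.sum_apply, inner_sum]

lemma entry_mul_star (zb zc : MatAlg r) (p q : Fin r) :
    entry (star zb * zc) p q
      = inner ℂ (zb (EuclideanSpace.single p 1)) (zc (EuclideanSpace.single q 1)) := by
  rw [ContinuousLinearMap.mul_def, ContinuousLinearMap.star_eq_adjoint]
  exact entry_adjoint_comp _ _ _ _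

lemma compress_lift (hn : 0 < n) (hnm : n ≤ m) {X : Type w} (φ : X → MatAlg n) (x : X) :
    compressMap hnm (liftMap hn hnm φ) x = φ x := by
  refine ContinuousLinearMap.ext fun ξ => ?_
  simp only [compressMap, liftMap, ContinuousLinearMap.comp_apply,
    ContinuousLinearMap.add_apply, ContinuousLinearMap.smul_apply,
    ContinuousLinearMap.sub_apply, ContinuousLinearMap.one_apply, Udag_Uemb_apply hnm,
    sub_self, map_zero, smul_zero, map_add, map_smul, add_zero]

lemma norm_compress_le (hnm : n ≤ m) (z : MatAlg m) :
    ‖(Udag n m hnm).comp (z.comp (Uemb n m hnm))‖ ≤ ‖z‖ := by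
  have h1 := ContinuousLinearMap.opNorm_comp_le (Udag n m hnm) (z.comp (Uemb n m hnm))
  have h2 := ContinuousLinearMap.opNorm_comp_le z (Uemb n m hnm)
  have h3 := norm_Udag_le hnm
  have h4 := norm_Uemb_le hnm
  have h5 : (0:ℝ) ≤ ‖z‖ := norm_nonneg _
  have h6 : (0:ℝ) ≤ ‖z.comp (Uemb n m hnm)‖ := norm_nonneg _
  have h7 : (0:ℝ) ≤ ‖Udag n m hnm‖ := norm_nonneg _
  have h8 : (0:ℝ) ≤ ‖Uemb n m hnm‖ := norm_nonneg _
  nlinarith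

lemma compress_sub (hnm : n ≤ m) (z w : MatAlg m) :
    (Udag n m hnm).comp ((z - w).comp (Uemb n m hnm))
      = (Udag n m hnm).comp (z.comp (Uemb n m hnm))
        - (Udag n m hnm).comp (w.comp (Uemb n m hnm)) := by
  refine ContinuousLinearMap.ext fun ξ => ?_
  simp [ContinuousLinearMap.comp_apply, ContinuousLinearMap.sub_apply, map_sub]

end statement14aux3
section statement14aux4

variable {n m : ℕ} {R : Type*} [Ring R] [StarRing R] [Algebra ℂ R] {X : Submodule ℂ R}

lemma compress_isUCP (hnm : n ≤ m) {φ : ↥X → MatAlg m} (hφ : IsUCP X φ) :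
    IsUCP X (compressMap hnm φ) := by
  obtain ⟨hlin, hu, hcp⟩ := hφ
  refine ⟨⟨fun x y => ?_, fun c x => ?_⟩, fun x hx => ?_, fun k x hx => ?_⟩
  · refine ContinuousLinearMap.ext fun ξ => ?_
    simp [compressMap, hlin.map_add, ContinuousLinearMap.comp_apply,
      ContinuousLinearMap.add_apply, map_add]
  · refine ContinuousLinearMap.ext fun ξ => ?_
    simp [compressMap, hlin.map_smul, ContinuousLinearMap.comp_apply,
      ContinuousLinearMap.smul_apply, map_smul]
  · rw [compressMap, hu x hx]
    rw [ContinuousLinearMap.one_def, ContinuousLinearMap.id_comp]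
    exact Udag_comp_Uemb hnm
  · obtain ⟨Y, hY⟩ := hcp k x hx
    have hent : ∀ i j, φ (x i j) = ∑ s, star (Y s i) * Y s j := by
      intro i j
      have h0 : (Matrix.of fun i j => φ (x i j)) i j = (Y.conjTranspose * Y) i j := by
        rw [hY]
      rw [Matrix.of_apply] at h0
      rw [h0, Matrix.mul_apply]
      exact Finset.sum_congr rfl fun s _ => by rw [Matrix.conjTranspose_apply]
    have hmat : (Matrix.of fun i j => compressMap hnm φ (x i j))
        = Matrix.of fun i j => ∑ s, (ContinuousLinearMap.adjoint
            ((Y s i).comp (Uemb n m hnm))).comp ((Y s j).comp (Uemb n m hnm)) := by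
      refine Matrix.ext fun i j => ?_
      rw [Matrix.of_apply, Matrix.of_apply]
      refine ContinuousLinearMap.ext fun ξ => ?_
      simp only [compressMap, hent i j, ContinuousLinearMap.comp_apply,
        ContinuousLinearMap.sum_apply, ContinuousLinearMap.mul_apply,
        ContinuousLinearMap.star_eq_adjoint, ContinuousLinearMap.adjoint_comp,
        map_sum]
      refine Finset.sum_congr rfl fun s _ => ?_
      rw [← Udag_eq_adjoint hnm]
    rw [hmat]
    exact matPos_gram fun s i => (Y s i).comp (Uemb n m hnm)

lemma lift_isUCP (hn : 0 < n) (hnm : n ≤ m) {φ : ↥X → MatAlg n} (hφ : IsUCP X φ) :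
    IsUCP X (liftMap hn hnm φ) := by
  obtain ⟨hlin, hu, hcp⟩ := hφ
  refine ⟨⟨fun x y => ?_, fun c x => ?_⟩, fun x hx => ?_, fun k x hx => ?_⟩
  · refine ContinuousLinearMap.ext fun ξ => ?_
    simp only [liftMap, hlin.map_add, entry_add, ContinuousLinearMap.add_apply,
      ContinuousLinearMap.comp_apply, ContinuousLinearMap.smul_apply, map_add, add_smul]
    abel
  · refine ContinuousLinearMap.ext fun ξ => ?_
    simp only [liftMap, hlin.map_smul, entry_smul, ContinuousLinearMap.add_apply,
      ContinuousLinearMap.comp_apply, ContinuousLinearMap.smul_apply,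
      ContinuousLinearMap.map_smul, smul_smul, smul_add]
  · rw [liftMap, hu x hx, entry_one, one_smul]
    rw [ContinuousLinearMap.one_def, ContinuousLinearMap.id_comp]
    abel
  · obtain ⟨Y, hY⟩ := hcp k x hx
    have hent : ∀ i j, φ (x i j) = ∑ s, star (Y s i) * Y s j := by
      intro i j
      have h0 : (Matrix.of fun i j => φ (x i j)) i j = (Y.conjTranspose * Y) i j := by
        rw [hY]
      rw [Matrix.of_apply] at h0
      rw [h0, Matrix.mul_apply]
      exact Finset.sum_congr rfl fun s _ => by rw [Matrix.conjTranspose_apply]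
    -- split as a sum of two matrix-positive parts
    have hsplit : (Matrix.of fun i j => liftMap hn hnm φ (x i j))
        = (Matrix.of fun i j => ∑ s, (ContinuousLinearMap.adjoint
              ((Y s i).comp (Udag n m hnm))).comp ((Y s j).comp (Udag n m hnm)))
          + Matrix.of fun i j => entry (φ (x i j)) ⟨0, hn⟩ ⟨0, hn⟩ •
              (1 - (Uemb n m hnm).comp (Udag n m hnm)) := by
      refine Matrix.ext fun i j => ?_
      rw [Matrix.add_apply, Matrix.of_apply, Matrix.of_apply, Matrix.of_apply]
      show (Uemb n m hnm).comp ((φ (x i j)).comp (Udag n m hnm))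
          + entry (φ (x i j)) ⟨0, hn⟩ ⟨0, hn⟩ • (1 - (Uemb n m hnm).comp (Udag n m hnm)) = _
      congr 1
      refine ContinuousLinearMap.ext fun ξ => ?_
      simp only [hent i j, ContinuousLinearMap.comp_apply, ContinuousLinearMap.sum_apply,
        ContinuousLinearMap.mul_apply, ContinuousLinearMap.star_eq_adjoint,
        ContinuousLinearMap.adjoint_comp, map_sum]
      refine Finset.sum_congr rfl fun s _ => ?_
      have hUdd : ContinuousLinearMap.adjoint (Udag n m hnm) = Uemb n m hnm := by
        rw [Udag_eq_adjoint hnm, ContinuousLinearMap.adjoint_adjoint]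
      rw [hUdd]
    rw [hsplit]
    refine matPos_add (matPos_gram fun s i => (Y s i).comp (Udag n m hnm)) ?_
    -- the scalar part
    rw [matPos_iff_posSemidef]
    set z : Fin n := ⟨0, hn⟩
    set Q : MatAlg m := 1 - (Uemb n m hnm).comp (Udag n m hnm) with hQ
    have hPstar : star ((Uemb n m hnm).comp (Udag n m hnm))
        = (Uemb n m hnm).comp (Udag n m hnm) := by
      rw [ContinuousLinearMap.star_eq_adjoint, ContinuousLinearMap.adjoint_comp,
        ← Udag_eq_adjoint hnm]
      congr 1
      rw [Udag_eq_adjoint hnm, ContinuousLinearMap.adjoint_adjoint]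
    have hQstar : star Q = Q := by
      rw [ContinuousLinearMap.star_eq_adjoint]
      symm
      rw [ContinuousLinearMap.eq_adjoint_iff]
      intro a b
      simp only [hQ, ContinuousLinearMap.sub_apply, ContinuousLinearMap.one_apply,
        ContinuousLinearMap.comp_apply, inner_sub_left, inner_sub_right]
      congr 1
      rw [Udag_eq_adjoint hnm]
      exact (ContinuousLinearMap.adjoint_inner_right _ _ _).symm.trans
        (ContinuousLinearMap.adjoint_inner_left _ _ _)
    have hQQ : Q * Q = Q := by
      rw [hQ, sub_mul, mul_sub, mul_sub, one_mul, mul_one]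
      have : ((Uemb n m hnm).comp (Udag n m hnm)) * ((Uemb n m hnm).comp (Udag n m hnm))
          = (Uemb n m hnm).comp (Udag n m hnm) := by
        refine ContinuousLinearMap.ext fun ξ => ?_
        simp [ContinuousLinearMap.mul_apply, ContinuousLinearMap.comp_apply,
          Udag_Uemb_apply hnm]
      rw [this]
      abel
    have hQdecomp : Q = star Q * Q := by rw [hQstar, hQQ]
    -- transport to complex matrices: a Kronecker product of two PSD matrices
    have hmatE : matE k m (Matrix.of fun i j => entry (φ (x i j)) z z • Q)
        = Matrix.kroneckerMap (· * ·)
            (Matrix.of fun i j : Fin k => entry (φ (x i j)) z z)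
            (Matrix.of fun p q : Fin m => entry Q p q) := by
      ext ⟨i, p⟩ ⟨j, q⟩
      rw [matE_apply, Matrix.of_apply, Matrix.kroneckerMap_apply, Matrix.of_apply,
        Matrix.of_apply, entry_smul]
    rw [hmatE]
    -- PSD of the two factors
    have hσ : (Matrix.of fun i j : Fin k => entry (φ (x i j)) z z).PosSemidef := by
      have : (Matrix.of fun i j : Fin k => entry (φ (x i j)) z z)
          = Matrix.of fun i j : Fin k => (∑ s, inner ℂ (Y s i (EuclideanSpace.single z 1))
              (Y s j (EuclideanSpace.single z 1)) : ℂ) := by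
        ext i j
        rw [Matrix.of_apply, Matrix.of_apply, hent i j, entry_sum]
        exact Finset.sum_congr rfl fun s _ => entry_mul_star _ _ _ _
      rw [this]
      exact gram_posSemidef fun s i => Y s i (EuclideanSpace.single z 1)
    have hQm : (Matrix.of fun p q : Fin m => entry Q p q).PosSemidef := by
      have hQm' : (Matrix.of fun p q : Fin m => entry Q p q)
          = Matrix.of fun p q : Fin m =>
              (∑ _s : Fin 1, inner ℂ (Q (EuclideanSpace.single p 1))
                (Q (EuclideanSpace.single q 1)) : ℂ) := by
        refine Matrix.ext fun p q => ?_
        rw [Matrix.of_apply, Matrix.of_apply, Fin.sum_univ_one]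
        conv_lhs => rw [hQdecomp]
        rw [entry_mul_star]
      rw [hQm']
      exact gram_posSemidef (N := 1) fun _s p => Q (EuclideanSpace.single p 1)
    -- PSD of Kronecker product
    obtain ⟨C, hC⟩ := psd_eq_star_mul hσ
    obtain ⟨D, hD⟩ := psd_eq_star_mul hQm
    rw [hC, hD, Matrix.mul_kronecker_mul]
    have hkr : Matrix.kroneckerMap (· * ·) C.conjTranspose D.conjTranspose
        = (Matrix.kroneckerMap (· * ·) C D).conjTranspose := by
      ext ⟨i, p⟩ ⟨j, q⟩
      simp only [Matrix.kroneckerMap_apply, Matrix.conjTranspose_apply, star_mul']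
    rw [hkr]
    exact Matrix.posSemidef_conjTranspose_mul_self _

end statement14aux4
section statement14aux5

variable {n m : ℕ}

lemma crossRho_lift_le (S : LipOpSys A) (T : LipOpSys B) (M : LipOpSys (A × B))
    (hn : 0 < n) (hnm : n ≤ m) (φ : ↥S.X → MatAlg n) (ψ' : ↥T.X → MatAlg m) :
    crossRho S T M n φ (compressMap hnm ψ') ≤ crossRho S T M m (liftMap hn hnm φ) ψ' := by
  refine iSup_le fun p => le_trans ?_ (le_iSup _ p)
  rw [ENNReal.coe_le_coe, ← NNReal.coe_le_coe, coe_nnnorm, coe_nnnorm]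
  have h1 : φ p.1.1 - compressMap hnm ψ' p.1.2
      = (Udag n m hnm).comp
          ((liftMap hn hnm φ p.1.1 - ψ' p.1.2).comp (Uemb n m hnm)) := by
    rw [compress_sub hnm]
    exact congrArg₂ Sub.sub (compress_lift hn hnm φ p.1.1).symm rfl
  rw [h1]
  exact norm_compress_le hnm _

lemma crossRho_lift_le' (S : LipOpSys A) (T : LipOpSys B) (M : LipOpSys (A × B))
    (hn : 0 < n) (hnm : n ≤ m) (ψ : ↥T.X → MatAlg n) (φ' : ↥S.X → MatAlg m) :
    crossRho S T M n (compressMap hnm φ') ψ ≤ crossRho S T M m φ' (liftMap hn hnm ψ) := by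
  refine iSup_le fun p => le_trans ?_ (le_iSup _ p)
  rw [ENNReal.coe_le_coe, ← NNReal.coe_le_coe, coe_nnnorm, coe_nnnorm]
  have h1 : compressMap hnm φ' p.1.1 - ψ p.1.2
      = (Udag n m hnm).comp
          ((φ' p.1.1 - liftMap hn hnm ψ p.1.2).comp (Uemb n m hnm)) := by
    rw [compress_sub hnm]
    exact congrArg₂ Sub.sub rfl (compress_lift hn hnm ψ p.1.2).symm
  rw [h1]
  exact norm_compress_le hnm _

end statement14aux5
/-- For Lip-normed operator systems `(X, L_X)`, `(Y, L_Y)` and natural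
numbers `m > n ≥ 1`, one has `distⁿₛ(X, Y) ≤ distᵐₛ(X, Y)`. -/
theorem statement14 (S : LipOpSys A) (T : LipOpSys B) (n m : ℕ)
    (hn : 1 ≤ n) (hnm : n < m) :
    distN S T n ≤ distN S T m := by
  have h0 : 0 < n := hn
  have hle : n ≤ m := le_of_lt hnm
  refine iInf_mono fun M => ?_
  refine max_le_max ?_ ?_
  · refine iSup₂_le fun φ hφ => ?_
    have hφ' : liftMap h0 hle φ ∈ UCPn S m := lift_isUCP h0 hle hφ
    refine le_trans ?_ (le_iSup₂ (liftMap h0 hle φ) hφ')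
    refine le_iInf₂ fun ψ' hψ' => ?_
    refine le_trans (iInf₂_le (compressMap hle ψ') (compress_isUCP hle hψ')) ?_
    exact crossRho_lift_le S T M.1 h0 hle φ ψ'
  · refine iSup₂_le fun ψ hψ => ?_
    have hψ' : liftMap h0 hle ψ ∈ UCPn T m := lift_isUCP h0 hle hψ
    refine le_trans ?_ (le_iSup₂ (liftMap h0 hle ψ) hψ')
    refine le_iInf₂ fun φ' hφ' => ?_
    refine le_trans (iInf₂_le (compressMap hle φ') (compress_isUCP hle hφ')) ?_
    exact crossRho_lift_le' S T M.1 h0 hle ψ φ'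

end QGHD
end
end
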